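/- arXiv:2107.07350 — 3 statements merged into one kernel-verified Lean document; each statement's English description precedes it below -/
import Mathlib

section
/- Canonical completion from a 2-serrated domain: let Ω = (I₁×I₁) ∪ (I₂×I₂) where I₁, I₂ are sets with nonempty intersection J = I₁ ∩ I₂ covering I, and let K_Ω be a partial covariance on Ω. Define K⋆(s,t) = K_Ω(s,t) for (s,t) ∈ Ω, and K⋆(s,t) = ⟨K_Ω(s,·)|_J, K_Ω(·,t)|_J⟩_{ℋ(K_J)} otherwise. Then K⋆ is a well-defined covariance kernel on I extending K_Ω. -/
open Set MeasureTheory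
open scoped RealInnerProductSpace Classical

noncomputable section

/-- `K` is a covariance kernel on the set `S`: symmetric and positive semidefinite. -/
def IsCovOn {I : Type*} (S : Set I) (K : I → I → ℝ) : Prop :=
  (∀ s ∈ S, ∀ t ∈ S, K s t = K t s) ∧
  ∀ (n : ℕ) (t : Fin n → I), (∀ i, t i ∈ S) → ∀ c : Fin n → ℝ,
    0 ≤ ∑ i, ∑ j, c i * c j * K (t i) (t j)

/-- `Ω` is a symmetric domain containing the diagonal. -/
def IsSymmDomain {I : Type*} (Ω : Set (I × I)) : Prop :=
  (∀ s t : I, (s, t) ∈ Ω ↔ (t, s) ∈ Ω) ∧ ∀ t : I, (t, t) ∈ Ω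

/-- `K` is a partial covariance on `Ω`: each square inside `Ω` carries a covariance. -/
def IsPartialCov {I : Type*} (Ω : Set (I × I)) (K : I → I → ℝ) : Prop :=
  ∀ J : Set I, J ×ˢ J ⊆ Ω → IsCovOn J K

/-- `K` is a covariance-kernel completion of `KΩ` from the domain `Ω`. -/
def IsCompletion {I : Type*} (Ω : Set (I × I)) (KΩ K : I → I → ℝ) : Prop :=
  IsCovOn (univ : Set I) K ∧ ∀ p ∈ Ω, K p.1 p.2 = KΩ p.1 p.2

/-- `a ∈ H` represents the function `f : J → ℝ` in the (abstract realization via the feature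
map `φ` of the) RKHS of the kernel realized by `φ`: `a` lies in the closed span of the
features and the reproducing formula `f u = ⟪a, φ u⟫` holds. -/
def RepIn {J : Type*} {H : Type*} [NormedAddCommGroup H] [InnerProductSpace ℝ H]
    (φ : J → H) (a : H) (f : J → ℝ) : Prop :=
  a ∈ closure ((Submodule.span ℝ (Set.range φ) : Submodule ℝ H) : Set H) ∧
  ∀ u : J, f u = ⟪a, φ u⟫

/-- Bilinear expansion of the inner product of two finite linear combinations. -/
private lemma inner_comb {H : Type*} [NormedAddCommGroup H] [InnerProductSpace ℝ H]
    {n m : ℕ} (c : Fin n → ℝ) (d : Fin m → ℝ) (x : Fin n → H) (y : Fin m → H) :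
    ⟪∑ i, c i • x i, ∑ j, d j • y j⟫ = ∑ i, ∑ j, c i * d j * ⟪x i, y j⟫ := by
  rw [sum_inner]
  refine Finset.sum_congr rfl fun i _ => ?_
  rw [inner_sum]
  refine Finset.sum_congr rfl fun j _ => ?_
  rw [real_inner_smul_left, real_inner_smul_right]; ring

/-- A function has at most one representer in the closed span of the features. -/
private lemma rep_unique {J : Type*} {H : Type*} [NormedAddCommGroup H]
    [InnerProductSpace ℝ H] (φ : J → H) (x y : H) (f : J → ℝ)
    (hx : RepIn φ x f) (hy : RepIn φ y f) : x = y := by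
  set S : Submodule ℝ H := Submodule.span ℝ (Set.range φ) with hS
  have hx1 : x ∈ S.topologicalClosure := by
    rw [← SetLike.mem_coe, Submodule.topologicalClosure_coe]; exact hx.1
  have hy1 : y ∈ S.topologicalClosure := by
    rw [← SetLike.mem_coe, Submodule.topologicalClosure_coe]; exact hy.1
  have hmem : x - y ∈ closure (S : Set H) := by
    rw [← Submodule.topologicalClosure_coe, SetLike.mem_coe]
    exact Submodule.sub_mem _ hx1 hy1
  have horth : ∀ z ∈ S, ⟪x - y, z⟫ = (0 : ℝ) := by
    intro z hz
    induction hz using Submodule.span_induction with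
    | mem w hw =>
      obtain ⟨u, rfl⟩ := hw
      rw [inner_sub_left, ← hx.2 u, ← hy.2 u, sub_self]
    | zero => simp
    | add w₁ w₂ _ _ h1 h2 => rw [inner_add_right, h1, h2, add_zero]
    | smul r w _ h1 => rw [real_inner_smul_right, h1, mul_zero]
  have hzero : ⟪x - y, x - y⟫ = (0 : ℝ) := by
    have hcl : IsClosed {z : H | ⟪x - y, z⟫ = (0 : ℝ)} :=
      isClosed_eq (Continuous.inner continuous_const continuous_id) continuous_const
    exact closure_minimal (fun z hz => horth z hz) hcl hmem
  have := (inner_self_eq_zero (𝕜 := ℝ)).mp hzero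
  exact sub_eq_zero.mp this

/-- Schur-complement inequality: the squared RKHS-norm of a linear combination of the
representers is dominated by the covariance quadratic form. -/
private lemma schur_aux {I : Type*} {I₁ I₂ : Set I} (KΩ : I → I → ℝ)
    {H : Type*} [NormedAddCommGroup H] [InnerProductSpace ℝ H]
    (φ : ↥(I₁ ∩ I₂) → H)
    (hφ : ∀ u v : ↥(I₁ ∩ I₂), KΩ u.1 v.1 = ⟪φ u, φ v⟫)
    (a : I → H)
    (ha : ∀ s : I, RepIn φ (a s) (fun u : ↥(I₁ ∩ I₂) => KΩ s u.1))
    (A : Set I) (hA : IsCovOn A KΩ) (hJA : (I₁ ∩ I₂) ⊆ A)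
    (n : ℕ) (t : Fin n → I) (ht : ∀ i, t i ∈ A) (c : Fin n → ℝ) :
    ⟪∑ i, c i • a (t i), ∑ i, c i • a (t i)⟫ ≤ ∑ i, ∑ j, c i * c j * KΩ (t i) (t j) := by
  set S : Submodule ℝ H := Submodule.span ℝ (Set.range φ) with hS
  set b : H := ∑ i, c i • a (t i) with hb
  have hbmem : b ∈ closure (S : Set H) := by
    rw [← Submodule.topologicalClosure_coe, SetLike.mem_coe]
    refine Submodule.sum_mem _ fun i _ => Submodule.smul_mem _ _ ?_
    rw [← SetLike.mem_coe, Submodule.topologicalClosure_coe]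
    exact (ha (t i)).1
  refine le_of_forall_pos_le_add fun ε hε => ?_
  obtain ⟨v, hvS, hvd⟩ := Metric.mem_closure_iff.mp hbmem (Real.sqrt ε) (Real.sqrt_pos.mpr hε)
  obtain ⟨k, d, g, hg⟩ := Submodule.mem_span_set'.mp hvS
  have hgu : ∀ i : Fin k, ∃ u : ↥(I₁ ∩ I₂), φ u = (g i : H) := fun i => (g i).2
  choose u hu using hgu
  have hv : v = ∑ i, d i • φ (u i) := by
    rw [← hg]; exact (Finset.sum_congr rfl fun i _ => by rw [hu i]).symm
  have h1 : ∀ (i : Fin n) (l : Fin k), KΩ (t i) ((u l : ↥(I₁ ∩ I₂)) : I) = ⟪a (t i), φ (u l)⟫ :=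
    fun i l => (ha (t i)).2 (u l)
  have h2 : ∀ (l : Fin k) (j : Fin n), KΩ ((u l : ↥(I₁ ∩ I₂)) : I) (t j) = ⟪a (t j), φ (u l)⟫ := by
    intro l j
    rw [hA.1 _ (hJA (u l).2) _ (ht j)]
    exact (ha (t j)).2 (u l)
  have h3 : ∀ (l m : Fin k),
      KΩ ((u l : ↥(I₁ ∩ I₂)) : I) ((u m : ↥(I₁ ∩ I₂)) : I) = ⟪φ (u l), φ (u m)⟫ :=
    fun l m => hφ (u l) (u m)
  have hbv : ⟪b, v⟫ = ∑ i, ∑ l, c i * d l * ⟪a (t i), φ (u l)⟫ := by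
    rw [hb, hv]; exact inner_comb c d _ _
  have hvv : ⟪v, v⟫ = ∑ l, ∑ m, d l * d m * ⟪φ (u l), φ (u m)⟫ := by
    rw [hv]; exact inner_comb d d _ _
  have hpos := hA.2 (n + k) (Fin.append t fun l => ((u l : ↥(I₁ ∩ I₂)) : I))
    (fun i => by
      refine Fin.addCases (fun i => ?_) (fun l => ?_) i
      · rw [Fin.append_left]; exact ht i
      · rw [Fin.append_right]; exact hJA (u l).2)
    (Fin.append c fun l => -(d l))
  have hsplit :
      (∑ i : Fin (n + k), ∑ j : Fin (n + k),
          (Fin.append c fun l => -(d l)) i * (Fin.append c fun l => -(d l)) j *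
            KΩ (Fin.append t (fun l => ((u l : ↥(I₁ ∩ I₂)) : I)) i)
               (Fin.append t (fun l => ((u l : ↥(I₁ ∩ I₂)) : I)) j))
      = (∑ i, ∑ j, c i * c j * KΩ (t i) (t j)) - ⟪b, v⟫ - ⟪b, v⟫ + ⟪v, v⟫ := by
    simp only [Fin.sum_univ_add, Fin.append_left, Fin.append_right, Finset.sum_add_distrib]
    have e2 : (∑ i : Fin n, ∑ l : Fin k,
        c i * -(d l) * KΩ (t i) ((u l : ↥(I₁ ∩ I₂)) : I)) = -⟪b, v⟫ := by
      rw [hbv, ← Finset.sum_neg_distrib]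
      refine Finset.sum_congr rfl fun i _ => ?_
      rw [← Finset.sum_neg_distrib]
      refine Finset.sum_congr rfl fun l _ => ?_
      rw [h1 i l]; ring
    have e3 : (∑ l : Fin k, ∑ j : Fin n,
        -(d l) * c j * KΩ ((u l : ↥(I₁ ∩ I₂)) : I) (t j)) = -⟪b, v⟫ := by
      have hswap : ⟪b, v⟫ = ∑ l : Fin k, ∑ j : Fin n, c j * d l * ⟪a (t j), φ (u l)⟫ := by
        rw [hbv]; exact Finset.sum_comm
      rw [hswap, ← Finset.sum_neg_distrib]
      refine Finset.sum_congr rfl fun l _ => ?_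
      rw [← Finset.sum_neg_distrib]
      refine Finset.sum_congr rfl fun j _ => ?_
      rw [h2 l j]; ring
    have e4 : (∑ l : Fin k, ∑ m : Fin k,
        -(d l) * -(d m) * KΩ ((u l : ↥(I₁ ∩ I₂)) : I) ((u m : ↥(I₁ ∩ I₂)) : I)) = ⟪v, v⟫ := by
      rw [hvv]
      refine Finset.sum_congr rfl fun l _ => Finset.sum_congr rfl fun m _ => ?_
      rw [h3 l m]; ring
    rw [e2, e3, e4]; ring
  rw [hsplit] at hpos
  have hbvd : ⟪b - v, b - v⟫ < ε := by
    have hlt : ‖b - v‖ < Real.sqrt ε := by rw [← dist_eq_norm]; exact hvd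
    calc ⟪b - v, b - v⟫ = ‖b - v‖ * ‖b - v‖ := real_inner_self_eq_norm_mul_norm _
      _ < Real.sqrt ε * Real.sqrt ε := mul_self_lt_mul_self (norm_nonneg _) hlt
      _ = ε := Real.mul_self_sqrt hε.le
  have hexp := real_inner_sub_sub_self b v
  linarith

/-- Canonical completion from a 2-serrated domain: given a partial covariance `KΩ` on
`Ω = (I₁×I₁) ∪ (I₂×I₂)` with `I₁ ∪ I₂ = I` and `J = I₁ ∩ I₂ ≠ ∅`, the kernel which equals
`KΩ` on `Ω` and `⟨KΩ(s,·)|_J, KΩ(·,t)|_J⟩_{ℋ(K_J)}` off `Ω` is a well-defined covariance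
completing `KΩ`.  The RKHS inner product is expressed through an arbitrary feature-map
realization `(H, φ)` of `K_J` and representing vectors `a s` of the sections `KΩ(s,·)|_J`. -/
theorem canonical_completion_two_serrated {I : Type*} (I₁ I₂ : Set I)
    (hcover : I₁ ∪ I₂ = univ) (hne : (I₁ ∩ I₂).Nonempty)
    (KΩ : I → I → ℝ)
    (hpc : IsPartialCov ((I₁ ×ˢ I₁) ∪ (I₂ ×ˢ I₂)) KΩ)
    (H : Type*) [NormedAddCommGroup H] [InnerProductSpace ℝ H]
    (φ : ↥(I₁ ∩ I₂) → H)
    (hφ : ∀ u v : ↥(I₁ ∩ I₂), KΩ u.1 v.1 = ⟪φ u, φ v⟫)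
    (a : I → H)
    (ha : ∀ s : I, RepIn φ (a s) (fun u : ↥(I₁ ∩ I₂) => KΩ s u.1)) :
    IsCompletion ((I₁ ×ˢ I₁) ∪ (I₂ ×ˢ I₂)) KΩ
      (fun s t => if (s, t) ∈ (I₁ ×ˢ I₁) ∪ (I₂ ×ˢ I₂) then KΩ s t else ⟪a s, a t⟫) := by
  obtain ⟨j₀, hj₀⟩ := hne
  have hcov1 : IsCovOn I₁ KΩ := hpc I₁ subset_union_left
  have hcov2 : IsCovOn I₂ KΩ := hpc I₂ subset_union_right
  have haφ : ∀ (s : I) (hs : s ∈ I₁ ∩ I₂), a s = φ ⟨s, hs⟩ := by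
    intro s hs
    refine rep_unique φ (a s) (φ ⟨s, hs⟩) (fun u => KΩ s u.1) (ha s) ?_
    exact ⟨subset_closure (Submodule.subset_span ⟨⟨s, hs⟩, rfl⟩), fun u => hφ ⟨s, hs⟩ u⟩
  have hJa : ∀ s t : I, s ∈ I₁ ∩ I₂ → t ∈ I₁ ∩ I₂ → KΩ s t = ⟪a s, a t⟫ := by
    intro s t hs ht'
    rw [haφ s hs, haφ t ht']
    exact hφ ⟨s, hs⟩ ⟨t, ht'⟩
  have hmemΩ : ∀ s t : I, (s, t) ∈ (I₁ ×ˢ I₁) ∪ (I₂ ×ˢ I₂) ↔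
      (s ∈ I₁ ∧ t ∈ I₁) ∨ (s ∈ I₂ ∧ t ∈ I₂) := by
    intro s t; simp [Set.mem_prod]
  have hcases : ∀ s : I, s ∈ I₁ ∨ s ∈ I₂ := by
    intro s
    have : s ∈ I₁ ∪ I₂ := by rw [hcover]; trivial
    exact this
  constructor
  · constructor
    · -- symmetry
      intro s _ t _
      simp only
      by_cases h : (s, t) ∈ (I₁ ×ˢ I₁) ∪ (I₂ ×ˢ I₂)
      · have h' : (t, s) ∈ (I₁ ×ˢ I₁) ∪ (I₂ ×ˢ I₂) := by
          rcases (hmemΩ s t).mp h with ⟨hs, ht⟩ | ⟨hs, ht⟩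
          · exact (hmemΩ t s).mpr (Or.inl ⟨ht, hs⟩)
          · exact (hmemΩ t s).mpr (Or.inr ⟨ht, hs⟩)
        rw [if_pos h, if_pos h']
        rcases (hmemΩ s t).mp h with ⟨hs, ht⟩ | ⟨hs, ht⟩
        · exact hcov1.1 s hs t ht
        · exact hcov2.1 s hs t ht
      · have h' : (t, s) ∉ (I₁ ×ˢ I₁) ∪ (I₂ ×ˢ I₂) := by
          intro hc
          rcases (hmemΩ t s).mp hc with ⟨hs, ht⟩ | ⟨hs, ht⟩
          · exact h ((hmemΩ s t).mpr (Or.inl ⟨ht, hs⟩))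
          · exact h ((hmemΩ s t).mpr (Or.inr ⟨ht, hs⟩))
        rw [if_neg h, if_neg h']
        exact real_inner_comm _ _
    · -- positive semidefiniteness
      intro n t _ c
      simp only
      set t₁ : Fin n → I := fun i => if t i ∈ I₁ then t i else j₀ with ht₁
      set c₁ : Fin n → ℝ := fun i => if t i ∈ I₁ then c i else 0 with hc₁
      set t₂ : Fin n → I := fun i => if t i ∈ I₂ then t i else j₀ with ht₂
      set c₂ : Fin n → ℝ := fun i => if t i ∈ I₂ then c i else 0 with hc₂
      have ht₁A : ∀ i, t₁ i ∈ I₁ := by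
        intro i; by_cases h : t i ∈ I₁
        · simp only [ht₁, if_pos h]; exact h
        · simp only [ht₁, if_neg h]; exact hj₀.1
      have ht₂A : ∀ i, t₂ i ∈ I₂ := by
        intro i; by_cases h : t i ∈ I₂
        · simp only [ht₂, if_pos h]; exact h
        · simp only [ht₂, if_neg h]; exact hj₀.2
      have key : ∀ i j,
          c i * c j * (if (t i, t j) ∈ (I₁ ×ˢ I₁) ∪ (I₂ ×ˢ I₂) then KΩ (t i) (t j)
            else ⟪a (t i), a (t j)⟫)
          = c i * c j * ⟪a (t i), a (t j)⟫
            + c₁ i * c₁ j * (KΩ (t₁ i) (t₁ j) - ⟪a (t₁ i), a (t₁ j)⟫)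
            + c₂ i * c₂ j * (KΩ (t₂ i) (t₂ j) - ⟪a (t₂ i), a (t₂ j)⟫) := by
        intro i j
        by_cases h1i : t i ∈ I₁ <;> by_cases h1j : t j ∈ I₁ <;>
          by_cases h2i : t i ∈ I₂ <;> by_cases h2j : t j ∈ I₂ <;>
          simp only [ht₁, hc₁, ht₂, hc₂, hmemΩ, h1i, h1j, h2i, h2j, if_true, if_false,
            and_self, and_true, true_and, and_false, false_and, or_true, true_or, or_false,
            false_or, or_self, not_true, not_false_iff] <;>
          first
            | (rw [hJa (t i) (t j) ⟨h1i, h2i⟩ ⟨h1j, h2j⟩]; ring)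
            | ring
      have hb0 : 0 ≤ ∑ i, ∑ j, c i * c j * ⟪a (t i), a (t j)⟫ := by
        rw [← inner_comb c c (fun i => a (t i)) (fun i => a (t i))]
        exact real_inner_self_nonneg
      have h1' : (∑ i, ∑ j, c₁ i * c₁ j * ⟪a (t₁ i), a (t₁ j)⟫)
          ≤ ∑ i, ∑ j, c₁ i * c₁ j * KΩ (t₁ i) (t₁ j) := by
        have h := schur_aux KΩ φ hφ a ha I₁ hcov1 inter_subset_left n t₁ ht₁A c₁
        rwa [inner_comb c₁ c₁ (fun i => a (t₁ i)) (fun i => a (t₁ i))] at h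
      have h2' : (∑ i, ∑ j, c₂ i * c₂ j * ⟪a (t₂ i), a (t₂ j)⟫)
          ≤ ∑ i, ∑ j, c₂ i * c₂ j * KΩ (t₂ i) (t₂ j) := by
        have h := schur_aux KΩ φ hφ a ha I₂ hcov2 inter_subset_right n t₂ ht₂A c₂
        rwa [inner_comb c₂ c₂ (fun i => a (t₂ i)) (fun i => a (t₂ i))] at h
      have hsum : (∑ i, ∑ j, c i * c j *
            (if (t i, t j) ∈ (I₁ ×ˢ I₁) ∪ (I₂ ×ˢ I₂) then KΩ (t i) (t j)
              else ⟪a (t i), a (t j)⟫))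
          = (∑ i, ∑ j, c i * c j * ⟪a (t i), a (t j)⟫)
            + ((∑ i, ∑ j, c₁ i * c₁ j * KΩ (t₁ i) (t₁ j))
               - ∑ i, ∑ j, c₁ i * c₁ j * ⟪a (t₁ i), a (t₁ j)⟫)
            + ((∑ i, ∑ j, c₂ i * c₂ j * KΩ (t₂ i) (t₂ j))
               - ∑ i, ∑ j, c₂ i * c₂ j * ⟪a (t₂ i), a (t₂ j)⟫) := by
        simp only [key, mul_sub, Finset.sum_add_distrib, Finset.sum_sub_distrib]
      rw [hsum]
      linarith
  · -- extension of `KΩ`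
    intro p hp
    simp only
    rw [if_pos (show (p.1, p.2) ∈ (I₁ ×ˢ I₁) ∪ (I₂ ×ˢ I₂) by rwa [Prod.mk.eta])]
end
end

section
/- Necessary and sufficient condition for unique completion from a 2-serrated domain: a partial covariance K_Ω on Ω = (I₁×I₁) ∪ (I₂×I₂) with J = I₁ ∩ I₂ admits a unique completion to I = I₁ ∪ I₂ if and only if K_{I₁}/K_J = 0 or K_{I₂}/K_J = 0. -/
open Set MeasureTheory
open scoped RealInnerProductSpace Classical

noncomputable section

section Aux
variable {I : Type*} {H : Type*} [NormedAddCommGroup H] [InnerProductSpace ℝ H]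

def Rker (KΩ : I → I → ℝ) (a : I → H) : I → I → ℝ := fun s t => KΩ s t - ⟪a s, a t⟫

lemma disc_lin' {A B : ℝ} (h : ∀ l : ℝ, 0 ≤ A + 2 * B * l) : B = 0 := by
  by_contra hB
  have h1 := h (-(A + 1) / (2 * B))
  have e : A + 2 * B * (-(A + 1) / (2 * B)) = -1 := by field_simp; ring
  rw [e] at h1; linarith

lemma disc_cs' {A B C : ℝ} (hA : 0 ≤ A) (hC : 0 ≤ C)
    (h : ∀ l : ℝ, 0 ≤ A + 2 * B * l + C * l ^ 2) : B ^ 2 ≤ A * C := by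
  rcases hC.lt_or_eq with hC' | hC'
  · have h1 := h (-B / C)
    have e : A + 2 * B * (-B / C) + C * (-B / C) ^ 2 = (A * C - B ^ 2) / C := by
      field_simp; ring
    rw [e] at h1
    rcases div_nonneg_iff.mp h1 with ⟨h3, _⟩ | ⟨_, h4⟩ <;> linarith
  · have hB : B = 0 := disc_lin' (A := A) (fun l => by have := h l; nlinarith)
    rw [hB, ← hC']; norm_num

lemma disc_quad0' {A B : ℝ} (hA : 0 ≤ A) (h : ∀ l : ℝ, 0 ≤ A * l ^ 2 + 2 * B * l) : B = 0 := by
  by_contra hB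
  have h1 := h (-B / (A + 1))
  have hA1 : (0:ℝ) < A + 1 := by linarith
  rw [div_pow, neg_pow] at h1
  have e : A * ((-1)^2 * B ^ 2 / (A + 1) ^ 2) + 2 * B * (-B / (A + 1))
      = -(B ^ 2 * (A + 2)) / (A + 1) ^ 2 := by field_simp; ring
  rw [e] at h1
  have hb2 : 0 < B ^ 2 := by positivity
  have hpos : (0:ℝ) < (A + 1) ^ 2 := by positivity
  rcases div_nonneg_iff.mp h1 with ⟨h2, _⟩ | ⟨_, h3⟩
  · nlinarith
  · nlinarith

lemma eps_le' {x C : ℝ} (hC : 0 ≤ C) (h : ∀ ε : ℝ, 0 < ε → x ≤ ε ^ 2 + ε * C) : x ≤ 0 := by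
  by_contra hx
  push_neg at hx
  set m := min 1 (x / (2 * (C + 1))) with hm
  have hd : 0 < x / (2 * (C + 1)) := by positivity
  have he : (0:ℝ) < m := lt_min one_pos hd
  have h1 := h _ he
  have e1 : m ≤ 1 := min_le_left _ _
  have e2 : m ≤ x / (2 * (C + 1)) := min_le_right _ _
  have hm2 : m ^ 2 ≤ m := by nlinarith
  have h3 : x ≤ m * (1 + C) := by nlinarith
  have h4 : m * (1 + C) ≤ x / 2 := by
    calc m * (1 + C) ≤ (x / (2 * (C + 1))) * (1 + C) :=
          mul_le_mul_of_nonneg_right e2 (by linarith)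
    _ = x / 2 := by field_simp; ring
  linarith


lemma quad_append {n m : ℕ} (K : I → I → ℝ) (t : Fin n → I) (u : Fin m → I)
    (c : Fin n → ℝ) (d : Fin m → ℝ) :
    ∑ i, ∑ j, (Fin.append c d i) * (Fin.append c d j) *
        K (Fin.append t u i) (Fin.append t u j)
      = (∑ i, ∑ j, c i * c j * K (t i) (t j)) + (∑ i, ∑ j, c i * d j * K (t i) (u j))
        + (∑ i, ∑ j, d i * c j * K (u i) (t j)) + (∑ i, ∑ j, d i * d j * K (u i) (u j)) := by
  simp only [Fin.sum_univ_add, Fin.append_left, Fin.append_right, Finset.sum_add_distrib]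
  ring

lemma inner_sum_sum {n m : ℕ} (x : Fin n → H) (y : Fin m → H) (c : Fin n → ℝ) (d : Fin m → ℝ) :
    ⟪∑ i, c i • x i, ∑ j, d j • y j⟫ = ∑ i, ∑ j, c i * d j * ⟪x i, y j⟫ := by
  rw [sum_inner]
  refine Finset.sum_congr rfl fun i _ => ?_
  rw [inner_sum]
  exact Finset.sum_congr rfl fun j _ => by
    rw [real_inner_smul_left, real_inner_smul_right]; ring

lemma dominate_aux {S T : Set I} (hTS : T ⊆ S) (KΩ : I → I → ℝ)
    (hcov : IsCovOn S KΩ)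
    (φ : ↥T → H) (hφ : ∀ u v : ↥T, KΩ u.1 v.1 = ⟪φ u, φ v⟫)
    (a : I → H) (ha : ∀ s : I, RepIn φ (a s) (fun u : ↥T => KΩ s u.1))
    {n : ℕ} (t : Fin n → I) (ht : ∀ i, t i ∈ S) (c : Fin n → ℝ) :
    ‖∑ i, c i • a (t i)‖ ^ 2 ≤ ∑ i, ∑ j, c i * c j * KΩ (t i) (t j) := by
  set sp := Submodule.span ℝ (Set.range φ) with hsp
  set v := ∑ i, c i • a (t i) with hv
  set Q := ∑ i, ∑ j, c i * c j * KΩ (t i) (t j) with hQ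
  have key : ∀ w ∈ sp, 2 * ⟪v, w⟫ - ‖w‖ ^ 2 ≤ Q := by
    intro w hw
    obtain ⟨m, d, g, hg⟩ := Submodule.mem_span_set'.mp hw
    choose u hu using fun k => (g k).2
    have hw' : w = ∑ k, d k • φ (u k) := by
      rw [← hg]; exact Finset.sum_congr rfl fun k _ => by rw [hu]
    have hpos := hcov.2 (n + m) (Fin.append t fun k => (u k).1)
      (fun i => by
        refine Fin.addCases (fun i => ?_) (fun k => ?_) i
        · simpa using ht i
        · simpa using hTS (u k).2) (Fin.append c fun k => -(d k))
    rw [quad_append] at hpos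
    have e1 : ∀ i k, KΩ (t i) (u k).1 = ⟪a (t i), φ (u k)⟫ := fun i k => (ha (t i)).2 (u k)
    have e2 : ∀ k i, KΩ (u k).1 (t i) = ⟪a (t i), φ (u k)⟫ := fun k i => by
      rw [hcov.1 _ (hTS (u k).2) _ (ht i)]; exact e1 i k
    have hP : ⟪v, w⟫ = ∑ i, ∑ k, c i * d k * ⟪a (t i), φ (u k)⟫ := by
      rw [hv, hw']; exact inner_sum_sum _ _ _ _
    have hW : ‖w‖ ^ 2 = ∑ k, ∑ l, d k * d l * ⟪φ (u k), φ (u l)⟫ := by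
      rw [← real_inner_self_eq_norm_sq]
      conv_lhs => rw [hw']
      exact inner_sum_sum _ _ _ _
    have T2 : ∑ i, ∑ k, c i * -d k * KΩ (t i) (u k).1 = -⟪v, w⟫ := by
      rw [hP]
      simp only [e1, mul_neg, neg_mul, Finset.sum_neg_distrib]
    have T3 : ∑ k, ∑ i, -d k * c i * KΩ (u k).1 (t i) = -⟪v, w⟫ := by
      simp only [e2, neg_mul, Finset.sum_neg_distrib]
      rw [hP, Finset.sum_comm]
      congr 1
      exact Finset.sum_congr rfl fun k _ => Finset.sum_congr rfl fun i _ => by ring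
    have T4 : ∑ k, ∑ l, -d k * -d l * KΩ (u k).1 (u l).1 = ‖w‖ ^ 2 := by
      simp only [hφ, neg_mul_neg]
      rw [hW]
    rw [T2, T3, T4] at hpos
    linarith
  refine le_of_forall_pos_le_add fun ε hε => ?_
  have hvc : v ∈ closure (sp : Set H) := by
    have hm : v ∈ sp.topologicalClosure := by
      refine Submodule.sum_mem _ fun i _ => Submodule.smul_mem _ _ ?_
      have := (ha (t i)).1
      rwa [← SetLike.mem_coe, Submodule.topologicalClosure_coe]
    rwa [← Submodule.topologicalClosure_coe, SetLike.mem_coe]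
  rw [Metric.mem_closure_iff] at hvc
  obtain ⟨w, hw, hd⟩ := hvc (Real.sqrt ε) (Real.sqrt_pos.mpr hε)
  have hvw : ‖v - w‖ ^ 2 < ε := by
    rw [dist_eq_norm] at hd
    have h0 : (0:ℝ) ≤ ‖v - w‖ := norm_nonneg _
    calc ‖v - w‖ ^ 2 < Real.sqrt ε ^ 2 := by
          apply pow_lt_pow_left₀ hd h0; norm_num
    _ = ε := Real.sq_sqrt hε.le
  have expand : ‖v - w‖ ^ 2 = ‖v‖ ^ 2 - 2 * ⟪v, w⟫ + ‖w‖ ^ 2 := norm_sub_sq_real v w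
  have := key w hw
  linarith


-- a = φ u on the overlap
lemma a_eq_phi {T : Type*} (φ : T → H) (b : H) (u : T)
    (hb1 : b ∈ closure ((Submodule.span ℝ (Set.range φ) : Submodule ℝ H) : Set H))
    (hb2 : ∀ v : T, ⟪b, φ v⟫ = ⟪φ u, φ v⟫) : b = φ u := by
  set sp := Submodule.span ℝ (Set.range φ) with hsp
  set d := b - φ u with hd
  have hdc : d ∈ closure (sp : Set H) := by
    have h1 : b ∈ sp.topologicalClosure := by
      rwa [← SetLike.mem_coe, Submodule.topologicalClosure_coe]
    have h2 : φ u ∈ sp.topologicalClosure :=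
      sp.le_topologicalClosure (Submodule.subset_span ⟨u, rfl⟩)
    have := Submodule.sub_mem _ h1 h2
    rwa [← Submodule.topologicalClosure_coe, SetLike.mem_coe]
  have horth : ∀ w ∈ closure (sp : Set H), ⟪d, w⟫ = 0 := by
    have hsub : (sp : Set H) ⊆ {w | ⟪d, w⟫ = 0} := by
      intro w hw
      induction hw using Submodule.span_induction with
      | mem x hx =>
        obtain ⟨v, rfl⟩ := hx
        show ⟪d, φ v⟫ = 0
        rw [hd, inner_sub_left, hb2 v]; ring
      | zero => simp
      | add x y _ _ hx hy => show ⟪d, x + y⟫ = 0; rw [inner_add_right]; simp_all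
      | smul r x _ hx => show ⟪d, r • x⟫ = 0; rw [real_inner_smul_right]; simp_all
    have hcl : IsClosed {w : H | ⟪d, w⟫ = 0} :=
      isClosed_eq (Continuous.inner continuous_const continuous_id) continuous_const
    intro w hw
    exact closure_minimal hsub hcl hw
  have : ⟪d, d⟫ = 0 := horth d hdc
  have hd0 : d = 0 := by rwa [inner_self_eq_zero] at this
  rw [hd] at hd0
  exact sub_eq_zero.mp hd0


section RR
variable {S T : Set I} (hTS : T ⊆ S) (KΩ : I → I → ℝ)
    (hcov : IsCovOn S KΩ)
    (φ : ↥T → H) (hφ : ∀ u v : ↥T, KΩ u.1 v.1 = ⟪φ u, φ v⟫)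
    (a : I → H) (ha : ∀ s : I, RepIn φ (a s) (fun u : ↥T => KΩ s u.1))

include hTS hcov hφ ha

lemma Rpsd {n : ℕ} (t : Fin n → I) (ht : ∀ i, t i ∈ S) (c : Fin n → ℝ) :
    0 ≤ ∑ i, ∑ j, c i * c j * Rker KΩ a (t i) (t j) := by
  have h1 := dominate_aux hTS KΩ hcov φ hφ a ha t ht c
  have h2 : ∑ i, ∑ j, c i * c j * ⟪a (t i), a (t j)⟫ = ‖∑ i, c i • a (t i)‖ ^ 2 := by
    rw [← real_inner_self_eq_norm_sq, inner_sum_sum]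
  simp only [Rker, mul_sub, Finset.sum_sub_distrib]
  linarith

lemma Rsymm (s t : I) (hs : s ∈ S) (ht : t ∈ S) :
    Rker KΩ a s t = Rker KΩ a t s := by
  simp only [Rker, hcov.1 s hs t ht, real_inner_comm]

lemma Rcs {n : ℕ} (t : Fin n → I) (ht : ∀ i, t i ∈ S) (c : Fin n → ℝ)
    (p : I) (hp : p ∈ S) :
    (∑ i, c i * Rker KΩ a (t i) p) ^ 2
      ≤ (∑ i, ∑ j, c i * c j * Rker KΩ a (t i) (t j)) * Rker KΩ a p p := by
  refine disc_cs' (Rpsd hTS KΩ hcov φ hφ a ha t ht c) ?_ fun l => ?_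
  · have := Rpsd hTS KΩ hcov φ hφ a ha (fun _ : Fin 1 => p) (fun _ => hp) (fun _ => 1)
    simpa using this
  · have hpos := Rpsd hTS KΩ hcov φ hφ a ha (Fin.append t fun _ : Fin 1 => p)
      (fun i => by
        refine Fin.addCases (fun i => ?_) (fun k => ?_) i
        · simpa using ht i
        · simpa using hp) (Fin.append c fun _ : Fin 1 => l)
    rw [quad_append] at hpos
    have e2 : ∑ i, ∑ _j : Fin 1, c i * l * Rker KΩ a (t i) p
        = (∑ i, c i * Rker KΩ a (t i) p) * l := by
      simp [Finset.sum_mul]; exact Finset.sum_congr rfl fun i _ => by ring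
    have e3 : ∑ _i : Fin 1, ∑ j, l * c j * Rker KΩ a p (t j)
        = (∑ i, c i * Rker KΩ a (t i) p) * l := by
      rw [Fin.sum_univ_one, Finset.sum_mul]
      exact Finset.sum_congr rfl fun j _ => by
        rw [Rsymm hTS KΩ hcov φ hφ a ha p (t j) hp (ht j)]; ring
    have e4 : ∑ _i : Fin 1, ∑ _j : Fin 1, l * l * Rker KΩ a p p
        = Rker KΩ a p p * l ^ 2 := by simp; ring
    rw [e2, e3, e4] at hpos
    linarith

lemma Rdiag_nonneg (p : I) (hp : p ∈ S) : 0 ≤ Rker KΩ a p p := by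
  have := Rpsd hTS KΩ hcov φ hφ a ha (fun _ : Fin 1 => p) (fun _ => hp) (fun _ => 1)
  simpa using this

lemma exists_diag_pos (hns : ¬ ∀ s ∈ S, ∀ t ∈ S, KΩ s t = ⟪a s, a t⟫) :
    ∃ p ∈ S, 0 < Rker KΩ a p p := by
  push_neg at hns
  obtain ⟨s, hs, t, ht, hst⟩ := hns
  by_contra hcon
  push_neg at hcon
  have hz : ∀ p ∈ S, Rker KΩ a p p = 0 := fun p hp =>
    le_antisymm (hcon p hp) (Rdiag_nonneg hTS KΩ hcov φ hφ a ha p hp)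
  have := Rcs hTS KΩ hcov φ hφ a ha (fun _ : Fin 1 => s) (fun _ => hs) (fun _ => 1) t ht
  simp [hz s hs, hz t ht] at this
  have h2 : Rker KΩ a s t = 0 := by
    have := sq_nonneg (Rker KΩ a s t)
    nlinarith
  exact hst (by simpa [Rker, sub_eq_zero] using h2)

end RR


section TwoSq
variable {I₁ I₂ : Set I} {KΩ : I → I → ℝ} {φ : ↥(I₁ ∩ I₂) → H} {a : I → H}

def K0 (I₁ I₂ : Set I) (KΩ : I → I → ℝ) (a : I → H) : I → I → ℝ :=
  fun s t => if (s, t) ∈ (I₁ ×ˢ I₁) ∪ (I₂ ×ˢ I₂) then KΩ s t else ⟪a s, a t⟫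

lemma hmem (hcover : I₁ ∪ I₂ = univ) (z : I) : z ∈ I₁ ∨ z ∈ I₂ := by
  have : z ∈ I₁ ∪ I₂ := hcover ▸ mem_univ z
  exact this

lemma cov1 (hpc : IsPartialCov ((I₁ ×ˢ I₁) ∪ (I₂ ×ˢ I₂)) KΩ) : IsCovOn I₁ KΩ :=
  hpc I₁ subset_union_left
lemma cov2 (hpc : IsPartialCov ((I₁ ×ˢ I₁) ∪ (I₂ ×ˢ I₂)) KΩ) : IsCovOn I₂ KΩ :=
  hpc I₂ subset_union_right

lemma omem (hcover : I₁ ∪ I₂ = univ) (z : I) (u : ↥(I₁ ∩ I₂)) :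
    (z, u.1) ∈ (I₁ ×ˢ I₁) ∪ (I₂ ×ˢ I₂) ∧ (u.1, z) ∈ (I₁ ×ˢ I₁) ∪ (I₂ ×ˢ I₂) := by
  rcases hmem hcover z with hz | hz
  · exact ⟨Or.inl ⟨hz, u.2.1⟩, Or.inl ⟨u.2.1, hz⟩⟩
  · exact ⟨Or.inr ⟨hz, u.2.2⟩, Or.inr ⟨u.2.2, hz⟩⟩

lemma symmOm (hpc : IsPartialCov ((I₁ ×ˢ I₁) ∪ (I₂ ×ˢ I₂)) KΩ)
    {s t : I} (h : (s, t) ∈ (I₁ ×ˢ I₁) ∪ (I₂ ×ˢ I₂)) : KΩ s t = KΩ t s := by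
  rcases h with ⟨h1, h2⟩ | ⟨h1, h2⟩
  · exact (cov1 hpc).1 s h1 t h2
  · exact (cov2 hpc).1 s h1 t h2

lemma OmSymmIff (s t : I) :
    (s, t) ∈ (I₁ ×ˢ I₁) ∪ (I₂ ×ˢ I₂) ↔ (t, s) ∈ (I₁ ×ˢ I₁) ∪ (I₂ ×ˢ I₂) := by
  simp only [Set.mem_union, Set.mem_prod]; tauto

lemma haphi (hφ : ∀ u v : ↥(I₁ ∩ I₂), KΩ u.1 v.1 = ⟪φ u, φ v⟫)
    (ha : ∀ s : I, RepIn φ (a s) (fun u : ↥(I₁ ∩ I₂) => KΩ s u.1))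
    (u : ↥(I₁ ∩ I₂)) : a u.1 = φ u := by
  refine a_eq_phi φ (a u.1) u (ha u.1).1 fun v => ?_
  rw [← hφ u v]
  exact ((ha u.1).2 v).symm

lemma RJzero (hcover : I₁ ∪ I₂ = univ)
    (hpc : IsPartialCov ((I₁ ×ˢ I₁) ∪ (I₂ ×ˢ I₂)) KΩ)
    (hφ : ∀ u v : ↥(I₁ ∩ I₂), KΩ u.1 v.1 = ⟪φ u, φ v⟫)
    (ha : ∀ s : I, RepIn φ (a s) (fun u : ↥(I₁ ∩ I₂) => KΩ s u.1))
    (z : I) (u : ↥(I₁ ∩ I₂)) :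
    Rker KΩ a z u.1 = 0 ∧ Rker KΩ a u.1 z = 0 := by
  have h1 : Rker KΩ a z u.1 = 0 := by
    have h2 := (ha z).2 u
    simp only at h2
    simp only [Rker, haphi hφ ha u, h2]
    ring
  refine ⟨h1, ?_⟩
  have hsym := symmOm hpc (omem hcover z u).2
  simp only [Rker] at h1 ⊢
  rw [hsym, real_inner_comm]
  exact h1

lemma K0_decomp (hcover : I₁ ∪ I₂ = univ)
    (hpc : IsPartialCov ((I₁ ×ˢ I₁) ∪ (I₂ ×ˢ I₂)) KΩ)
    (hφ : ∀ u v : ↥(I₁ ∩ I₂), KΩ u.1 v.1 = ⟪φ u, φ v⟫)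
    (ha : ∀ s : I, RepIn φ (a s) (fun u : ↥(I₁ ∩ I₂) => KΩ s u.1))
    (j₀ : I) (hj₀ : j₀ ∈ I₁ ∩ I₂) {n : ℕ} (t : Fin n → I) (c : Fin n → ℝ) :
    ∑ i, ∑ j, c i * c j * K0 I₁ I₂ KΩ a (t i) (t j)
      = ⟪∑ i, c i • a (t i), ∑ j, c j • a (t j)⟫
        + (∑ i, ∑ j, (if t i ∈ I₁ then c i else 0) * (if t j ∈ I₁ then c j else 0) *
            Rker KΩ a (if t i ∈ I₁ then t i else j₀) (if t j ∈ I₁ then t j else j₀))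
        + (∑ i, ∑ j, (if t i ∈ I₂ then c i else 0) * (if t j ∈ I₂ then c j else 0) *
            Rker KΩ a (if t i ∈ I₂ then t i else j₀) (if t j ∈ I₂ then t j else j₀)) := by
  rw [inner_sum_sum]
  simp only [← Finset.sum_add_distrib]
  refine Finset.sum_congr rfl fun i _ => Finset.sum_congr rfl fun j _ => ?_
  have key : ∀ z w : I,
      K0 I₁ I₂ KΩ a z w
        = ⟪a z, a w⟫
          + (if z ∈ I₁ then 1 else 0) * (if w ∈ I₁ then 1 else 0) *
              Rker KΩ a (if z ∈ I₁ then z else j₀) (if w ∈ I₁ then w else j₀)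
          + (if z ∈ I₂ then 1 else 0) * (if w ∈ I₂ then 1 else 0) *
              Rker KΩ a (if z ∈ I₂ then z else j₀) (if w ∈ I₂ then w else j₀) := by
    intro z w
    by_cases h1z : z ∈ I₁ <;> by_cases h1w : w ∈ I₁ <;>
      by_cases h2z : z ∈ I₂ <;> by_cases h2w : w ∈ I₂ <;>
      simp only [K0, Set.mem_union, Set.mem_prod, h1z, h1w, h2z, h2w, if_true, if_false,
        and_true, and_false, true_and, false_and, or_false, false_or, or_self, if_neg,
        not_false_iff, one_mul, zero_mul, mul_zero, mul_one, add_zero, zero_add, if_pos]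
    all_goals
      try exact (hmem hcover z).elim (fun h => absurd h h1z) (fun h => absurd h h2z)
    all_goals
      try exact (hmem hcover w).elim (fun h => absurd h h1w) (fun h => absurd h h2w)
    all_goals
      try ((try simp only [Rker]); ring)
    all_goals
      first
      | (have hz0 := (RJzero hcover hpc hφ ha w ⟨z, ⟨h1z, h2z⟩⟩).2
         simp only [Rker] at hz0
         (try simp only [Rker]); linarith)
      | (have hz0 := (RJzero hcover hpc hφ ha z ⟨w, ⟨h1w, h2w⟩⟩).1
         simp only [Rker] at hz0
         (try simp only [Rker]); linarith)
  rw [key (t i) (t j)]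
  by_cases h1i : t i ∈ I₁ <;> by_cases h1j : t j ∈ I₁ <;>
    by_cases h2i : t i ∈ I₂ <;> by_cases h2j : t j ∈ I₂ <;>
    simp only [h1i, h1j, h2i, h2j, if_true, if_false, one_mul, zero_mul, mul_zero, mul_one] <;>
    ring

lemma Rpsd' {S : Set I} (hTS : I₁ ∩ I₂ ⊆ S) (hcov : IsCovOn S KΩ)
    (hφ : ∀ u v : ↥(I₁ ∩ I₂), KΩ u.1 v.1 = ⟪φ u, φ v⟫)
    (ha : ∀ s : I, RepIn φ (a s) (fun u : ↥(I₁ ∩ I₂) => KΩ s u.1))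
    {n : ℕ} (t : Fin n → I) (ht : ∀ i, t i ∈ S) (c : Fin n → ℝ) :
    0 ≤ ∑ i, ∑ j, c i * c j * Rker KΩ a (t i) (t j) :=
  Rpsd hTS KΩ hcov φ hφ a ha t ht c

lemma Rcs' {S : Set I} (hTS : I₁ ∩ I₂ ⊆ S) (hcov : IsCovOn S KΩ)
    (hφ : ∀ u v : ↥(I₁ ∩ I₂), KΩ u.1 v.1 = ⟪φ u, φ v⟫)
    (ha : ∀ s : I, RepIn φ (a s) (fun u : ↥(I₁ ∩ I₂) => KΩ s u.1))
    {n : ℕ} (t : Fin n → I) (ht : ∀ i, t i ∈ S) (c : Fin n → ℝ)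
    (p : I) (hp : p ∈ S) :
    (∑ i, c i * Rker KΩ a (t i) p) ^ 2
      ≤ (∑ i, ∑ j, c i * c j * Rker KΩ a (t i) (t j)) * Rker KΩ a p p :=
  Rcs hTS KΩ hcov φ hφ a ha t ht c p hp

lemma K0_completion (hcover : I₁ ∪ I₂ = univ)
    (hpc : IsPartialCov ((I₁ ×ˢ I₁) ∪ (I₂ ×ˢ I₂)) KΩ)
    (hφ : ∀ u v : ↥(I₁ ∩ I₂), KΩ u.1 v.1 = ⟪φ u, φ v⟫)
    (ha : ∀ s : I, RepIn φ (a s) (fun u : ↥(I₁ ∩ I₂) => KΩ s u.1))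
    (j₀ : I) (hj₀ : j₀ ∈ I₁ ∩ I₂) :
    IsCompletion ((I₁ ×ˢ I₁) ∪ (I₂ ×ˢ I₂)) KΩ (K0 I₁ I₂ KΩ a) := by
  refine ⟨⟨fun s _ t _ => ?_, fun n t _ c => ?_⟩, fun p hp => if_pos hp⟩
  · by_cases h : (s, t) ∈ (I₁ ×ˢ I₁) ∪ (I₂ ×ˢ I₂)
    · rw [K0, if_pos h, K0, if_pos ((OmSymmIff s t).mp h)]
      exact symmOm hpc h
    · rw [K0, if_neg h, K0, if_neg (fun h' => h ((OmSymmIff t s).mp h')),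
        real_inner_comm]
  · rw [K0_decomp hcover hpc hφ ha j₀ hj₀ t c]
    have h1 := Rpsd' (S := I₁) inter_subset_left (cov1 hpc) hφ ha
      (fun i => if t i ∈ I₁ then t i else j₀)
      (fun i => by by_cases h : t i ∈ I₁ <;> simp [h, hj₀.1])
      (fun i => if t i ∈ I₁ then c i else 0)
    have h2 := Rpsd' (S := I₂) inter_subset_right (cov2 hpc) hφ ha
      (fun i => if t i ∈ I₂ then t i else j₀)
      (fun i => by by_cases h : t i ∈ I₂ <;> simp [h, hj₀.2])
      (fun i => if t i ∈ I₂ then c i else 0)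
    have h0 := real_inner_self_nonneg (x := ∑ i, c i • a (t i))
    linarith

lemma forced (hcover : I₁ ∪ I₂ = univ)
    (hpc : IsPartialCov ((I₁ ×ˢ I₁) ∪ (I₂ ×ˢ I₂)) KΩ)
    (hφ : ∀ u v : ↥(I₁ ∩ I₂), KΩ u.1 v.1 = ⟪φ u, φ v⟫)
    (ha : ∀ s : I, RepIn φ (a s) (fun u : ↥(I₁ ∩ I₂) => KΩ s u.1))
    (K' : I → I → ℝ) (hK' : IsCompletion ((I₁ ×ˢ I₁) ∪ (I₂ ×ˢ I₂)) KΩ K')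
    (s : I) (hs : KΩ s s = ⟪a s, a s⟫) (t : I) : K' s t = ⟪a s, a t⟫ := by
  have hsym : ∀ z w : I, K' z w = K' w z := fun z w =>
    hK'.1.1 z (mem_univ _) w (mem_univ _)
  have hdg : ∀ z : I, (z, z) ∈ (I₁ ×ˢ I₁) ∪ (I₂ ×ˢ I₂) := fun z => by
    rcases hmem hcover z with h | h
    · exact Or.inl ⟨h, h⟩
    · exact Or.inr ⟨h, h⟩
  have hK'ss : K' s s = ‖a s‖ ^ 2 := by
    rw [hK'.2 (s, s) (hdg s), hs, real_inner_self_eq_norm_sq]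
  have hK'tt : K' t t = KΩ t t := hK'.2 (t, t) (hdg t)
  have hdiagK : 0 ≤ KΩ t t := by
    rcases hmem hcover t with h | h
    · have := (cov1 hpc).2 1 (fun _ => t) (fun _ => h) (fun _ => 1); simpa using this
    · have := (cov2 hpc).2 1 (fun _ => t) (fun _ => h) (fun _ => 1); simpa using this
  have e_s : ∀ z : I, ∀ u : ↥(I₁ ∩ I₂), K' z u.1 = ⟪a z, φ u⟫ := fun z u => by
    rw [hK'.2 (z, u.1) (omem hcover z u).1]
    exact (ha z).2 u
  set sp := Submodule.span ℝ (Set.range φ) with hsp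
  -- Step A
  have stepA : ∀ (l : ℝ), ∀ w ∈ sp,
      0 ≤ ‖a s - w‖ ^ 2 + l ^ 2 * KΩ t t + 2 * l * (K' s t - ⟪a t, w⟫) := by
    intro l w hw
    obtain ⟨m, d, g, hg⟩ := Submodule.mem_span_set'.mp hw
    choose u hu using fun k => (g k).2
    have hw' : w = ∑ k, d k • φ (u k) := by
      rw [← hg]; exact Finset.sum_congr rfl fun k _ => by rw [hu]
    have hws : ⟪a s, w⟫ = ∑ k, d k * ⟪a s, φ (u k)⟫ := by
      rw [hw', inner_sum]
      exact Finset.sum_congr rfl fun k _ => by rw [real_inner_smul_right]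
    have hwt : ⟪a t, w⟫ = ∑ k, d k * ⟪a t, φ (u k)⟫ := by
      rw [hw', inner_sum]
      exact Finset.sum_congr rfl fun k _ => by rw [real_inner_smul_right]
    have hW : ‖w‖ ^ 2 = ∑ k, ∑ l', d k * d l' * ⟪φ (u k), φ (u l')⟫ := by
      rw [← real_inner_self_eq_norm_sq]
      conv_lhs => rw [hw']
      exact inner_sum_sum _ _ _ _
    have hpos := hK'.1.2 (2 + m) (Fin.append ![s, t] fun k => (u k).1)
      (fun _ => mem_univ _) (Fin.append ![(1 : ℝ), l] fun k => -(d k))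
    rw [quad_append] at hpos
    have B1 : (∑ i, ∑ j, (![(1:ℝ), l]) i * (![(1:ℝ), l]) j *
          K' ((![s, t]) i) ((![s, t]) j))
        = ‖a s‖ ^ 2 + 2 * l * K' s t + l ^ 2 * KΩ t t := by
      simp only [Fin.sum_univ_two, Matrix.cons_val_zero, Matrix.cons_val_one, Matrix.head_cons]
      rw [hK'ss, hK'tt, hsym t s]; ring
    have S1 : ∑ k, (1:ℝ) * -(d k) * K' s (u k).1 = -⟪a s, w⟫ := by
      rw [hws, ← Finset.sum_neg_distrib]
      exact Finset.sum_congr rfl fun k _ => by rw [e_s s (u k)]; ring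
    have S2 : ∑ k, l * -(d k) * K' t (u k).1 = -(l * ⟪a t, w⟫) := by
      rw [hwt, Finset.mul_sum, ← Finset.sum_neg_distrib]
      exact Finset.sum_congr rfl fun k _ => by rw [e_s t (u k)]; ring
    have B2 : (∑ i, ∑ k, (![(1:ℝ), l]) i * -(d k) * K' ((![s, t]) i) (u k).1)
        = -⟪a s, w⟫ + -(l * ⟪a t, w⟫) := by
      rw [Fin.sum_univ_two]
      simp only [Matrix.cons_val_zero, Matrix.cons_val_one, Matrix.head_cons]
      rw [S1, S2]
    have B3 : (∑ k, ∑ i, -(d k) * (![(1:ℝ), l]) i * K' (u k).1 ((![s, t]) i))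
        = -⟪a s, w⟫ + -(l * ⟪a t, w⟫) := by
      rw [Finset.sum_comm, Fin.sum_univ_two]
      simp only [Matrix.cons_val_zero, Matrix.cons_val_one, Matrix.head_cons]
      rw [← S1, ← S2]
      congr 1
      · exact Finset.sum_congr rfl fun k _ => by rw [hsym (u k).1 s]; ring
      · exact Finset.sum_congr rfl fun k _ => by rw [hsym (u k).1 t]; ring
    have B4 : (∑ k, ∑ l', -(d k) * -(d l') * K' (u k).1 (u l').1) = ‖w‖ ^ 2 := by
      rw [hW]
      refine Finset.sum_congr rfl fun k _ => Finset.sum_congr rfl fun l' _ => ?_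
      rw [hK'.2 ((u k).1, (u l').1) (Or.inl ⟨(u k).2.1, (u l').2.1⟩), hφ (u k) (u l')]
      ring
    rw [B1, B2, B3, B4] at hpos
    have hexp : ‖a s - w‖ ^ 2 = ‖a s‖ ^ 2 - 2 * ⟪a s, w⟫ + ‖w‖ ^ 2 := norm_sub_sq_real _ _
    linarith
  -- Step B
  have stepB : ∀ l : ℝ, 0 ≤ KΩ t t * l ^ 2 + 2 * (K' s t - ⟪a t, a s⟫) * l := by
    intro l
    have hclos : a s ∈ closure (sp : Set H) := (ha s).1
    rw [Metric.mem_closure_iff] at hclos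
    have key : -(KΩ t t * l ^ 2 + 2 * (K' s t - ⟪a t, a s⟫) * l)
        ≤ 0 := by
      refine eps_le' (x := -(KΩ t t * l ^ 2 + 2 * (K' s t - ⟪a t, a s⟫) * l))
        (C := 2 * |l| * ‖a t‖) (by positivity) fun ε hε => ?_
      obtain ⟨w, hw, hdw⟩ := hclos ε hε
      rw [dist_eq_norm] at hdw
      have h1 := stepA l w hw
      have h2 : ‖a s - w‖ ^ 2 ≤ ε ^ 2 :=
        pow_le_pow_left₀ (norm_nonneg _) hdw.le 2
      have h3 : ⟪a t, w⟫ = ⟪a t, a s⟫ - ⟪a t, a s - w⟫ := by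
        rw [inner_sub_right]; ring
      have h4 : |⟪a t, a s - w⟫| ≤ ‖a t‖ * ‖a s - w‖ := abs_real_inner_le_norm _ _
      have h5 : ‖a t‖ * ‖a s - w‖ ≤ ‖a t‖ * ε :=
        mul_le_mul_of_nonneg_left hdw.le (norm_nonneg _)
      have h6 : 2 * l * ⟪a t, a s - w⟫ ≤ 2 * |l| * (‖a t‖ * ε) := by
        have := le_abs_self (2 * l * ⟪a t, a s - w⟫)
        have habs : |2 * l * ⟪a t, a s - w⟫| ≤ 2 * |l| * (‖a t‖ * ε) := by
          rw [abs_mul, abs_mul]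
          simp only [abs_two]
          have : |⟪a t, a s - w⟫| ≤ ‖a t‖ * ε := le_trans h4 h5
          have hl : (0:ℝ) ≤ 2 * |l| := by positivity
          calc 2 * |l| * |⟪a t, a s - w⟫| ≤ 2 * |l| * (‖a t‖ * ε) :=
            mul_le_mul_of_nonneg_left this hl
          _ = 2 * |l| * (‖a t‖ * ε) := rfl
        linarith
      rw [h3] at h1
      have : -(KΩ t t * l ^ 2 + 2 * (K' s t - ⟪a t, a s⟫) * l)
          ≤ ‖a s - w‖ ^ 2 + 2 * l * ⟪a t, a s - w⟫ := by nlinarith [h1]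
      calc -(KΩ t t * l ^ 2 + 2 * (K' s t - ⟪a t, a s⟫) * l)
          ≤ ‖a s - w‖ ^ 2 + 2 * l * ⟪a t, a s - w⟫ := this
      _ ≤ ε ^ 2 + 2 * |l| * (‖a t‖ * ε) := by linarith
      _ = ε ^ 2 + ε * (2 * |l| * ‖a t‖) := by ring
    linarith
  -- Step C
  have hB0 : K' s t - ⟪a t, a s⟫ = 0 :=
    disc_quad0' hdiagK fun l => by have := stepB l; linarith
  have : K' s t = ⟪a t, a s⟫ := by linarith
  rw [this, real_inner_comm]

def K1 (I₁ I₂ : Set I) (KΩ : I → I → ℝ) (a : I → H) (p q : I) : I → I → ℝ :=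
  fun s t => K0 I₁ I₂ KΩ a s t +
    ((if s ∈ I₁ then Rker KΩ a s p else 0) * (if t ∈ I₂ then Rker KΩ a t q else 0)
      + (if s ∈ I₂ then Rker KΩ a s q else 0) * (if t ∈ I₁ then Rker KΩ a t p else 0))
      / Real.sqrt (Rker KΩ a p p * Rker KΩ a q q)

lemma K1_completion (hcover : I₁ ∪ I₂ = univ)
    (hpc : IsPartialCov ((I₁ ×ˢ I₁) ∪ (I₂ ×ˢ I₂)) KΩ)
    (hφ : ∀ u v : ↥(I₁ ∩ I₂), KΩ u.1 v.1 = ⟪φ u, φ v⟫)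
    (ha : ∀ s : I, RepIn φ (a s) (fun u : ↥(I₁ ∩ I₂) => KΩ s u.1))
    (j₀ : I) (hj₀ : j₀ ∈ I₁ ∩ I₂)
    (p q : I) (hp : p ∈ I₁) (hq : q ∈ I₂)
    (hpp : 0 < Rker KΩ a p p) (hqq : 0 < Rker KΩ a q q) :
    IsCompletion ((I₁ ×ˢ I₁) ∪ (I₂ ×ˢ I₂)) KΩ (K1 I₁ I₂ KΩ a p q) := by
  have hS : 0 < Real.sqrt (Rker KΩ a p p * Rker KΩ a q q) :=
    Real.sqrt_pos.mpr (by positivity)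
  have hS2 : (Real.sqrt (Rker KΩ a p p * Rker KΩ a q q)) ^ 2
      = Rker KΩ a p p * Rker KΩ a q q := Real.sq_sqrt (by positivity)
  set S := Real.sqrt (Rker KΩ a p p * Rker KΩ a q q) with hSdef
  have hK0 := K0_completion hcover hpc hφ ha j₀ hj₀
  constructor
  constructor
  · -- symmetry
    intro z _ w _
    have h1 := hK0.1.1 z (mem_univ _) w (mem_univ _)
    simp only [K1]
    rw [h1]; ring
  · -- PSD
    intro n t ht c
    set g : I → ℝ := fun z => if z ∈ I₁ then Rker KΩ a z p else 0 with hgdef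
    set h : I → ℝ := fun z => if z ∈ I₂ then Rker KΩ a z q else 0 with hhdef
    set G := ∑ i, c i * g (t i) with hG
    set Hh := ∑ i, c i * h (t i) with hHh
    have e : ∀ z w : I, K1 I₁ I₂ KΩ a p q z w
        = K0 I₁ I₂ KΩ a z w + (g z * h w + h z * g w) / S := fun z w => rfl
    have split : ∑ i, ∑ j, c i * c j * K1 I₁ I₂ KΩ a p q (t i) (t j)
        = (∑ i, ∑ j, c i * c j * K0 I₁ I₂ KΩ a (t i) (t j))
          + (G * Hh + Hh * G) / S := by
      simp only [e, mul_add, Finset.sum_add_distrib]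
      congr 1
      calc ∑ i, ∑ j, c i * c j * ((g (t i) * h (t j) + h (t i) * g (t j)) / S)
          = ∑ i, (∑ j, ((c i * g (t i)) * (c j * h (t j))
              + (c i * h (t i)) * (c j * g (t j)))) / S := by
            refine Finset.sum_congr rfl fun i _ => ?_
            rw [Finset.sum_div]
            exact Finset.sum_congr rfl fun j _ => by ring
      _ = (∑ i, ∑ j, ((c i * g (t i)) * (c j * h (t j))
              + (c i * h (t i)) * (c j * g (t j)))) / S := by
            rw [Finset.sum_div]
      _ = (G * Hh + Hh * G) / S := by
            congr 1
            rw [hG, hHh, Finset.sum_mul_sum, Finset.sum_mul_sum, ← Finset.sum_add_distrib]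
            exact Finset.sum_congr rfl fun i _ => by rw [Finset.sum_add_distrib]
    rw [split, K0_decomp hcover hpc hφ ha j₀ hj₀ t c]
    set Q₁ := ∑ i, ∑ j, (if t i ∈ I₁ then c i else 0) * (if t j ∈ I₁ then c j else 0) *
        Rker KΩ a (if t i ∈ I₁ then t i else j₀) (if t j ∈ I₁ then t j else j₀) with hQ1
    set Q₂ := ∑ i, ∑ j, (if t i ∈ I₂ then c i else 0) * (if t j ∈ I₂ then c j else 0) *
        Rker KΩ a (if t i ∈ I₂ then t i else j₀) (if t j ∈ I₂ then t j else j₀) with hQ2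
    have hmem1 : ∀ i, (if t i ∈ I₁ then t i else j₀) ∈ I₁ := fun i => by
      by_cases hh : t i ∈ I₁ <;> simp [hh, hj₀.1]
    have hmem2 : ∀ i, (if t i ∈ I₂ then t i else j₀) ∈ I₂ := fun i => by
      by_cases hh : t i ∈ I₂ <;> simp [hh, hj₀.2]
    have hQ1n : 0 ≤ Q₁ :=
      Rpsd' inter_subset_left (cov1 hpc) hφ ha _ hmem1 _
    have hQ2n : 0 ≤ Q₂ :=
      Rpsd' inter_subset_right (cov2 hpc) hφ ha _ hmem2 _
    have hGeq : G = ∑ i, (if t i ∈ I₁ then c i else 0) *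
        Rker KΩ a (if t i ∈ I₁ then t i else j₀) p := by
      rw [hG]
      refine Finset.sum_congr rfl fun i _ => ?_
      by_cases hh : t i ∈ I₁ <;> simp [g, hh]
    have hHeq : Hh = ∑ i, (if t i ∈ I₂ then c i else 0) *
        Rker KΩ a (if t i ∈ I₂ then t i else j₀) q := by
      rw [hHh]
      refine Finset.sum_congr rfl fun i _ => ?_
      by_cases hh : t i ∈ I₂ <;> simp [h, hh]
    have hG2 : G ^ 2 ≤ Q₁ * Rker KΩ a p p := by
      rw [hGeq]
      exact Rcs' inter_subset_left (cov1 hpc) hφ ha _ hmem1 _ p hp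
    have hH2 : Hh ^ 2 ≤ Q₂ * Rker KΩ a q q := by
      rw [hHeq]
      exact Rcs' inter_subset_right (cov2 hpc) hφ ha _ hmem2 _ q hq
    have hN : (0:ℝ) ≤ ⟪∑ i, c i • a (t i), ∑ j, c j • a (t j)⟫ := real_inner_self_nonneg
    clear_value G Hh Q₁ Q₂ S
    have key2 : 0 ≤ (Q₁ + Q₂) * S + 2 * (G * Hh) := by
      have h5 : 0 ≤ (Q₁ + Q₂) * S := mul_nonneg (by linarith) hS.le
      rcases le_or_gt 0 (G * Hh) with hgh | hgh
      · linarith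
      · have f1 : G ^ 2 * Hh ^ 2 ≤ (Q₁ * Rker KΩ a p p) * (Q₂ * Rker KΩ a q q) :=
          mul_le_mul hG2 hH2 (sq_nonneg Hh) (mul_nonneg hQ1n hpp.le)
        have f2 : Q₁ * Q₂ * (Rker KΩ a p p * Rker KΩ a q q) = Q₁ * Q₂ * S ^ 2 := by
          rw [hS2]
        have f3 : 0 ≤ (Q₁ - Q₂) ^ 2 * S ^ 2 := mul_nonneg (sq_nonneg _) (sq_nonneg _)
        have h4 : (2 * (G * Hh)) ^ 2 ≤ ((Q₁ + Q₂) * S) ^ 2 := by nlinarith [f1, f2, f3]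
        have h6 : 0 < (Q₁ + Q₂) * S - 2 * (G * Hh) := by linarith
        nlinarith [h4, h6]
    have hfin : -(Q₁ + Q₂) ≤ (G * Hh + Hh * G) / S := by
      rw [le_div_iff₀ hS]
      nlinarith [key2]
    linarith
  · -- restriction
    intro z hz
    have h1 := hK0.2 z hz
    simp only [K1]
    rw [h1]
    have : ((if z.1 ∈ I₁ then Rker KΩ a z.1 p else 0) *
        (if z.2 ∈ I₂ then Rker KΩ a z.2 q else 0)
        + (if z.1 ∈ I₂ then Rker KΩ a z.1 q else 0) *
          (if z.2 ∈ I₁ then Rker KΩ a z.2 p else 0)) = 0 := by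
      rcases hz with ⟨h1z, h2z⟩ | ⟨h1z, h2z⟩
      · -- both in I₁
        have e1 : (if z.2 ∈ I₂ then Rker KΩ a z.2 q else 0) = 0 := by
          by_cases h : z.2 ∈ I₂
          · rw [if_pos h]; exact (RJzero hcover hpc hφ ha q ⟨z.2, ⟨h2z, h⟩⟩).2
          · rw [if_neg h]
        have e2 : (if z.1 ∈ I₂ then Rker KΩ a z.1 q else 0) = 0 := by
          by_cases h : z.1 ∈ I₂
          · rw [if_pos h]; exact (RJzero hcover hpc hφ ha q ⟨z.1, ⟨h1z, h⟩⟩).2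
          · rw [if_neg h]
        rw [e1, e2]; ring
      · -- both in I₂
        have e1 : (if z.1 ∈ I₁ then Rker KΩ a z.1 p else 0) = 0 := by
          by_cases h : z.1 ∈ I₁
          · rw [if_pos h]; exact (RJzero hcover hpc hφ ha p ⟨z.1, ⟨h, h1z⟩⟩).2
          · rw [if_neg h]
        have e2 : (if z.2 ∈ I₁ then Rker KΩ a z.2 p else 0) = 0 := by
          by_cases h : z.2 ∈ I₁
          · rw [if_pos h]; exact (RJzero hcover hpc hφ ha p ⟨z.2, ⟨h, h2z⟩⟩).2
          · rw [if_neg h]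
        rw [e1, e2]; ring
    rw [this, zero_div, add_zero]

end TwoSq

end Aux

/-- Unique completion from a 2-serrated domain iff a Schur complement vanishes:
`KΩ` on `Ω = (I₁×I₁) ∪ (I₂×I₂)` admits a unique completion iff `K_{I₁}/K_J = 0` or
`K_{I₂}/K_J = 0`, where `(K_{I_i}/K_J)(s,t) = KΩ(s,t) − ⟨KΩ(s,·)|_J, KΩ(·,t)|_J⟩_{ℋ(K_J)}`
is expressed via the feature realization `(H, φ)` of `K_J` and representing vectors `a`. -/
theorem unique_completion_iff_schur_zero {I : Type*} (I₁ I₂ : Set I)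
    (hcover : I₁ ∪ I₂ = univ) (hne : (I₁ ∩ I₂).Nonempty)
    (KΩ : I → I → ℝ)
    (hpc : IsPartialCov ((I₁ ×ˢ I₁) ∪ (I₂ ×ˢ I₂)) KΩ)
    (H : Type*) [NormedAddCommGroup H] [InnerProductSpace ℝ H]
    (φ : ↥(I₁ ∩ I₂) → H)
    (hφ : ∀ u v : ↥(I₁ ∩ I₂), KΩ u.1 v.1 = ⟪φ u, φ v⟫)
    (a : I → H)
    (ha : ∀ s : I, RepIn φ (a s) (fun u : ↥(I₁ ∩ I₂) => KΩ s u.1)) :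
    (∃! K : I → I → ℝ, IsCompletion ((I₁ ×ˢ I₁) ∪ (I₂ ×ˢ I₂)) KΩ K) ↔
      ((∀ s ∈ I₁, ∀ t ∈ I₁, KΩ s t = ⟪a s, a t⟫) ∨
       (∀ s ∈ I₂, ∀ t ∈ I₂, KΩ s t = ⟪a s, a t⟫)) := by
  classical
  obtain ⟨j₀, hj₀⟩ := hne
  constructor
  · -- uniqueness implies a Schur complement vanishes
    intro hEU
    by_contra hcon
    push_neg at hcon
    obtain ⟨h1, h2⟩ := hcon
    have h1' : ¬ ∀ s ∈ I₁, ∀ t ∈ I₁, KΩ s t = ⟪a s, a t⟫ := by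
      obtain ⟨s, hs, t, ht, hne'⟩ := h1
      exact fun hall => hne' (hall s hs t ht)
    have h2' : ¬ ∀ s ∈ I₂, ∀ t ∈ I₂, KΩ s t = ⟪a s, a t⟫ := by
      obtain ⟨s, hs, t, ht, hne'⟩ := h2
      exact fun hall => hne' (hall s hs t ht)
    obtain ⟨p, hp, hpp⟩ :=
      exists_diag_pos inter_subset_left KΩ (cov1 hpc) φ hφ a ha h1'
    obtain ⟨q, hq, hqq⟩ :=
      exists_diag_pos inter_subset_right KΩ (cov2 hpc) φ hφ a ha h2'
    have hK0 := K0_completion hcover hpc hφ ha j₀ hj₀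
    have hK1 := K1_completion hcover hpc hφ ha j₀ hj₀ p q hp hq hpp hqq
    have heq : K0 I₁ I₂ KΩ a = K1 I₁ I₂ KΩ a p q :=
      (hEU.unique hK0 hK1)
    have hp2 : p ∉ I₂ := by
      intro hmem2
      have h0 : Rker KΩ a p p = 0 :=
        (RJzero hcover hpc hφ ha p ⟨p, ⟨hp, hmem2⟩⟩).1
      linarith
    have hq1 : q ∉ I₁ := by
      intro hmem1
      have h0 : Rker KΩ a q q = 0 :=
        (RJzero hcover hpc hφ ha q ⟨q, ⟨hmem1, hq⟩⟩).1
      linarith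
    have hS : 0 < Real.sqrt (Rker KΩ a p p * Rker KΩ a q q) :=
      Real.sqrt_pos.mpr (by positivity)
    have hval : K1 I₁ I₂ KΩ a p q p q = K0 I₁ I₂ KΩ a p q +
        (Rker KΩ a p p * Rker KΩ a q q) / Real.sqrt (Rker KΩ a p p * Rker KΩ a q q) := by
      simp only [K1, if_pos hp, if_pos hq, if_neg hp2, if_neg hq1]
      ring
    have hcontra : K0 I₁ I₂ KΩ a p q = K1 I₁ I₂ KΩ a p q p q := by rw [heq]
    rw [hval] at hcontra
    have hposit : 0 < (Rker KΩ a p p * Rker KΩ a q q) /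
        Real.sqrt (Rker KΩ a p p * Rker KΩ a q q) :=
      div_pos (by positivity) hS
    linarith
  · -- vanishing Schur complement implies uniqueness
    intro hor
    have hK0 := K0_completion hcover hpc hφ ha j₀ hj₀
    refine ⟨K0 I₁ I₂ KΩ a, hK0, ?_⟩
    intro K' hK'
    funext s t
    by_cases hst : (s, t) ∈ (I₁ ×ˢ I₁) ∪ (I₂ ×ˢ I₂)
    · rw [hK'.2 (s, t) hst]
      exact (hK0.2 (s, t) hst).symm
    · have hK0v : K0 I₁ I₂ KΩ a s t = ⟪a s, a t⟫ := if_neg hst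
      rw [hK0v]
      rcases hor with hcase | hcase
      · rcases hmem hcover s with hs1 | hs2
        · exact forced hcover hpc hφ ha K' hK' s (hcase s hs1 s hs1) t
        · have ht1 : t ∈ I₁ := by
            rcases hmem hcover t with h | h
            · exact h
            · exact absurd (Or.inr ⟨hs2, h⟩) hst
          rw [hK'.1.1 s (mem_univ _) t (mem_univ _),
            forced hcover hpc hφ ha K' hK' t (hcase t ht1 t ht1) s]
          exact real_inner_comm _ _
      · by_cases hs2 : s ∈ I₂
        · exact forced hcover hpc hφ ha K' hK' s (hcase s hs2 s hs2) t
        · have hs1 : s ∈ I₁ := by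
            rcases hmem hcover s with h | h
            · exact h
            · exact absurd h hs2
          have ht2 : t ∈ I₂ := by
            rcases hmem hcover t with h | h
            · exact absurd (Or.inl ⟨hs1, h⟩) hst
            · exact h
          rw [hK'.1.1 s (mem_univ _) t (mem_univ _),
            forced hcover hpc hφ ha K' hK' t (hcase t ht2 t ht2) s]
          exact real_inner_comm _ _
end
end

section
/- Range of admissible off-domain values: let K_Ω be a partial covariance on the 2-serrated domain Ω = (I₁×I₁)∪(I₂×I₂) with J = I₁∩I₂, and fix s ∈ I₁∖J, t ∈ I₂∖J, α ∈ ℝ. Then there exists a covariance completion K of K_Ω with K(s,t) = α + ⟨K_Ω(s,·)|_J, K_Ω(·,t)|_J⟩_{ℋ(K_J)} if and only if |α| ≤ √( (K_{I₁}/K_J)(s,s) · (K_{I₂}/K_J)(t,t) ). -/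
open Set MeasureTheory
open scoped RealInnerProductSpace Classical

noncomputable section

/- ### Auxiliary lemmas -/

lemma offdom_inner_closure_span_eq {H : Type*} [NormedAddCommGroup H] [InnerProductSpace ℝ H]
    {J : Type*} (φ : J → H) {w d : H}
    (hw : w ∈ closure ((Submodule.span ℝ (Set.range φ) : Submodule ℝ H) : Set H))
    (hd : ∀ u : J, ⟪d, φ u⟫ = 0) : ⟪w, d⟫ = 0 := by
  have hclosed : IsClosed {v : H | ⟪v, d⟫ = (0:ℝ)} :=
    isClosed_eq (Continuous.inner continuous_id continuous_const) continuous_const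
  have hsub : ((Submodule.span ℝ (Set.range φ) : Submodule ℝ H) : Set H) ⊆
      {v : H | ⟪v, d⟫ = (0:ℝ)} := by
    intro v hv
    induction hv using Submodule.span_induction with
    | mem x hx => obtain ⟨u, rfl⟩ := hx; simpa [real_inner_comm] using hd u
    | zero => simp
    | add x y _ _ hx hy =>
      simp only [Set.mem_setOf_eq, inner_add_left] at *
      rw [hx, hy]; ring
    | smul r x _ hx =>
      simp only [Set.mem_setOf_eq, inner_smul_left] at *
      rw [hx]; ring
  exact closure_minimal hsub hclosed hw

lemma offdom_span_approx {H : Type*} [NormedAddCommGroup H] [InnerProductSpace ℝ H]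
    {J : Type*} (φ : J → H) {w : H}
    (hw : w ∈ closure ((Submodule.span ℝ (Set.range φ) : Submodule ℝ H) : Set H))
    {ε : ℝ} (hε : 0 < ε) :
    ∃ (m : ℕ) (u : Fin m → J) (e : Fin m → ℝ), ‖w - ∑ k, e k • φ (u k)‖ < ε := by
  obtain ⟨z, hz, hdist⟩ := Metric.mem_closure_iff.1 hw ε hε
  obtain ⟨m, e, g, hg⟩ := Submodule.mem_span_set'.1 hz
  choose u hu using fun k => (g k).2
  refine ⟨m, u, e, ?_⟩
  have : ∑ k, e k • φ (u k) = z := by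
    rw [← hg]; congr 1; ext k; rw [hu k]
  rw [this]
  simpa [dist_eq_norm] using hdist

lemma offdom_sum_gram_eq {H : Type*} [NormedAddCommGroup H] [InnerProductSpace ℝ H]
    (n : ℕ) (b : Fin n → H) (c : Fin n → ℝ) :
    ∑ i, ∑ j, c i * c j * ⟪b i, b j⟫ = ‖∑ i, c i • b i‖ ^ 2 := by
  rw [← real_inner_self_eq_norm_sq, sum_inner]
  refine Finset.sum_congr rfl fun i _ => ?_
  rw [real_inner_smul_left, inner_sum, Finset.mul_sum]
  refine Finset.sum_congr rfl fun j _ => ?_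
  rw [real_inner_smul_right]; ring

lemma offdom_gram_le_quad {I : Type*} {H : Type*} [NormedAddCommGroup H]
    [InnerProductSpace ℝ H]
    {J : Type*} (φ : J → H) (K' : I → I → ℝ) (S : Set I)
    (hcov : IsCovOn S K') (ι : J → I) (hι : ∀ u, ι u ∈ S)
    (hφK : ∀ u v : J, K' (ι u) (ι v) = ⟪φ u, φ v⟫)
    (n : ℕ) (x : Fin n → I) (hx : ∀ i, x i ∈ S) (b : Fin n → H)
    (hb : ∀ i, b i ∈ closure ((Submodule.span ℝ (Set.range φ) : Submodule ℝ H) : Set H))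
    (hbK : ∀ i u, K' (x i) (ι u) = ⟪b i, φ u⟫)
    (c : Fin n → ℝ) :
    ‖∑ i, c i • b i‖ ^ 2 ≤ ∑ i, ∑ j, c i * c j * K' (x i) (x j) := by
  set w : H := ∑ i, c i • b i with hw
  set Q : ℝ := ∑ i, ∑ j, c i * c j * K' (x i) (x j) with hQ
  have step1 : ∀ (m : ℕ) (u : Fin m → J) (e : Fin m → ℝ),
      ‖w‖ ^ 2 - ‖w - ∑ k, e k • φ (u k)‖ ^ 2 ≤ Q := by
    intro m u e
    set z : H := ∑ k, e k • φ (u k) with hz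
    have hpsd := hcov.2 (n + m) (Fin.append x (fun k => ι (u k)))
      (fun i => by
        refine Fin.addCases (fun i => ?_) (fun k => ?_) i
        · simpa using hx i
        · simpa using hι (u k))
      (Fin.append c (fun k => -(e k)))
    have key : (0:ℝ) ≤ Q - 2 * ⟪w, z⟫ + ‖z‖ ^ 2 := by
      have expand : ∑ i : Fin (n+m), ∑ j : Fin (n+m),
          Fin.append c (fun k => -(e k)) i * Fin.append c (fun k => -(e k)) j *
            K' (Fin.append x (fun k => ι (u k)) i) (Fin.append x (fun k => ι (u k)) j)
          = Q - 2 * ⟪w, z⟫ + ‖z‖ ^ 2 := by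
        rw [Fin.sum_univ_add]
        simp only [Fin.append_left, Fin.append_right, Fin.sum_univ_add]
        have e1 : ∀ i : Fin n, ∀ k : Fin m, K' (x i) (ι (u k)) = ⟪b i, φ (u k)⟫ :=
          fun i k => hbK i (u k)
        have e2 : ∀ k : Fin m, ∀ i : Fin n, K' (ι (u k)) (x i) = ⟪b i, φ (u k)⟫ :=
          fun k i => by rw [hcov.1 _ (hι (u k)) _ (hx i)]; exact hbK i (u k)
        have hwz : ⟪w, z⟫ = ∑ i : Fin n, ∑ k : Fin m, c i * e k * ⟪b i, φ (u k)⟫ := by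
          rw [hw, hz, sum_inner]
          refine Finset.sum_congr rfl fun i _ => ?_
          rw [real_inner_smul_left, inner_sum, Finset.mul_sum]
          refine Finset.sum_congr rfl fun k _ => ?_
          rw [real_inner_smul_right]; ring
        have hzz : ‖z‖ ^ 2 = ∑ k : Fin m, ∑ l : Fin m, e k * e l * ⟪φ (u k), φ (u l)⟫ := by
          rw [← real_inner_self_eq_norm_sq, hz, sum_inner]
          refine Finset.sum_congr rfl fun k _ => ?_
          rw [real_inner_smul_left, inner_sum, Finset.mul_sum]
          refine Finset.sum_congr rfl fun l _ => ?_
          rw [real_inner_smul_right]; ring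
        rw [Finset.sum_add_distrib, Finset.sum_add_distrib]
        have hT2 : (∑ i : Fin n, ∑ k : Fin m, c i * -e k * ⟪b i, φ (u k)⟫) = -⟪w, z⟫ := by
          rw [hwz]
          simp only [mul_neg, neg_mul, Finset.sum_neg_distrib]
        have hT3 : (∑ k : Fin m, ∑ i : Fin n, -e k * c i * ⟪b i, φ (u k)⟫) = -⟪w, z⟫ := by
          rw [Finset.sum_comm, hwz]
          simp only [mul_neg, neg_mul, Finset.sum_neg_distrib]
          congr 1
          refine Finset.sum_congr rfl fun i _ => Finset.sum_congr rfl fun k _ => by ring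
        have hT4 : (∑ k : Fin m, ∑ l : Fin m, -e k * -e l * ⟪φ (u k), φ (u l)⟫)
            = ‖z‖ ^ 2 := by
          rw [hzz]
          simp only [neg_mul_neg]
        simp only [e1, e2, hφK]
        rw [hT2, hT3, hT4, ← hQ]
        ring
      linarith [expand ▸ hpsd]
    nlinarith [norm_sub_sq_real w z, key]
  by_contra hcon
  push_neg at hcon
  set ε : ℝ := ‖w‖ ^ 2 - Q with hε
  have hεpos : 0 < ε := by linarith
  have hb' : ∀ i, b i ∈ (Submodule.span ℝ (Set.range φ)).topologicalClosure := fun i => hb i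
  have hwmem : w ∈ (Submodule.span ℝ (Set.range φ)).topologicalClosure :=
    Submodule.sum_mem _ fun i _ => Submodule.smul_mem _ _ (hb' i)
  obtain ⟨m, u, e, hue⟩ := offdom_span_approx φ (hwmem : w ∈ closure _)
    (Real.sqrt_pos.2 hεpos)
  have h2 := step1 m u e
  have : ‖w - ∑ k, e k • φ (u k)‖ ^ 2 < ε := by
    have h0 : (0:ℝ) ≤ ‖w - ∑ k, e k • φ (u k)‖ := norm_nonneg _
    nlinarith [Real.sq_sqrt hεpos.le, hue]
  linarith

lemma offdom_kernel_cs {I : Type*} (D : I → I → ℝ) (S : Set I) (hcov : IsCovOn S D)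
    (n : ℕ) (x : Fin n → I) (hx : ∀ i, x i ∈ S) (c : Fin n → ℝ) {s : I} (hs : s ∈ S) :
    (∑ i, c i * D (x i) s) ^ 2 ≤ (∑ i, ∑ j, c i * c j * D (x i) (x j)) * D s s := by
  set Q : ℝ := ∑ i, ∑ j, c i * c j * D (x i) (x j) with hQ
  set u : ℝ := ∑ i, c i * D (x i) s with hu
  have key : ∀ τ : ℝ, 0 ≤ D s s * (τ * τ) + 2 * u * τ + Q := by
    intro τ
    have hpsd := hcov.2 (n + 1) (Fin.snoc x s)
      (fun i => by
        refine Fin.lastCases ?_ (fun i => ?_) i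
        · simpa using hs
        · simpa using hx i)
      (Fin.snoc c τ)
    rw [Fin.sum_univ_castSucc] at hpsd
    simp only [Fin.snoc_castSucc, Fin.snoc_last, Fin.sum_univ_castSucc] at hpsd
    have hsym : ∀ i, D s (x i) = D (x i) s := fun i => hcov.1 _ hs _ (hx i)
    calc (0:ℝ) ≤ _ := hpsd
    _ = D s s * (τ * τ) + 2 * u * τ + Q := by
        rw [hQ, hu]
        simp only [hsym, Finset.sum_add_distrib, Finset.sum_mul, Finset.mul_sum]
        ring_nf
        have hBC : ∑ i, c i * τ * D (x i) s + ∑ i, τ * c i * D (x i) s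
            = ∑ i, 2 * c i * D (x i) s * τ := by
          rw [← Finset.sum_add_distrib]
          exact Finset.sum_congr rfl fun i _ => by ring
        have hBC' : ∑ i, 2 * c i * D (x i) s * τ = ∑ i, τ * c i * D (x i) s * 2 :=
          Finset.sum_congr rfl fun i _ => by ring
        linarith [hBC, hBC']
  have hd := discrim_le_zero key
  simp only [discrim] at hd
  nlinarith [hd]

lemma offdom_num_bound (QA QB d₁ d₂ u v α : ℝ) (hQA : 0 ≤ QA) (hQB : 0 ≤ QB)
    (hd₁ : 0 ≤ d₁) (hd₂ : 0 ≤ d₂) (hu : u ^ 2 ≤ QA * d₁) (hv : v ^ 2 ≤ QB * d₂)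
    (hα : α ^ 2 ≤ d₁ * d₂) : 0 ≤ QA + QB + 2 * (α / (d₁ * d₂)) * u * v := by
  rcases eq_or_lt_of_le (mul_nonneg hd₁ hd₂) with hD | hD
  · rw [← hD, div_zero]
    simpa using by linarith
  · have key : 0 ≤ (QA + QB) * (d₁ * d₂) + 2 * α * u * v := by
      by_contra h
      push_neg at h
      have p1 : α ^ 2 * u ^ 2 ≤ (d₁ * d₂) * (QA * d₁) :=
        mul_le_mul hα hu (sq_nonneg u) (mul_nonneg hd₁ hd₂)
      have p2 : (α ^ 2 * u ^ 2) * v ^ 2 ≤ ((d₁ * d₂) * (QA * d₁)) * (QB * d₂) :=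
        mul_le_mul p1 hv (sq_nonneg v) (by positivity)
      have hn : 0 ≤ (QA + QB) * (d₁ * d₂) := by positivity
      have h3 : 2 * α * u * v < -((QA + QB) * (d₁ * d₂)) := by linarith
      have h4 : ((QA + QB) * (d₁ * d₂)) ^ 2 < (2 * α * u * v) ^ 2 := by nlinarith
      nlinarith [h4, p2, sq_nonneg ((QA - QB) * (d₁ * d₂))]
    have heq : QA + QB + 2 * (α / (d₁ * d₂)) * u * v
        = ((QA + QB) * (d₁ * d₂) + 2 * α * u * v) / (d₁ * d₂) := by
      rw [add_div, mul_div_cancel_right₀ _ hD.ne']; ring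
    rw [heq]
    exact div_nonneg key hD.le

lemma offdom_valrange (d₁ d₂ α : ℝ)
    (h2 : ∀ c d : ℝ, 0 ≤ c ^ 2 * d₁ + d ^ 2 * d₂ + 2 * c * d * α) :
    |α| ≤ Real.sqrt (d₁ * d₂) := by
  have hd₁ : 0 ≤ d₁ := by have := h2 1 0; nlinarith
  have hsq : α ^ 2 ≤ d₁ * d₂ := by
    by_cases hd : d₁ = 0
    · have hα0 : α = 0 := by
        by_contra hα
        have := h2 (-(d₂ + 1) / (2 * α)) 1
        rw [hd] at this
        have h2α : (2 : ℝ) * α ≠ 0 := by simpa using hα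
        have : (0:ℝ) ≤ d₂ + (-(d₂ + 1)) := by
          have hc : 2 * (-(d₂ + 1) / (2 * α)) * 1 * α = -(d₂ + 1) := by
            field_simp
          nlinarith [this]
        linarith
      rw [hα0, hd]
      norm_num
    · have hd' : 0 < d₁ := lt_of_le_of_ne hd₁ (Ne.symm hd)
      have := h2 (-α) d₁
      nlinarith
  exact Real.abs_le_sqrt hsq

/-- Range of admissible off-domain values: for `s ∈ I₁∖J`, `t ∈ I₂∖J` and `α ∈ ℝ`, there is
a completion `K` of `KΩ` with `K(s,t) = α + ⟨KΩ(s,·)|_J, KΩ(·,t)|_J⟩_{ℋ(K_J)}` iff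
`|α| ≤ √((K_{I₁}/K_J)(s,s) · (K_{I₂}/K_J)(t,t))`. -/
theorem off_domain_value_range {I : Type*} (I₁ I₂ : Set I)
    (hcover : I₁ ∪ I₂ = univ) (hne : (I₁ ∩ I₂).Nonempty)
    (KΩ : I → I → ℝ)
    (hpc : IsPartialCov ((I₁ ×ˢ I₁) ∪ (I₂ ×ˢ I₂)) KΩ)
    (H : Type*) [NormedAddCommGroup H] [InnerProductSpace ℝ H]
    (φ : ↥(I₁ ∩ I₂) → H)
    (hφ : ∀ u v : ↥(I₁ ∩ I₂), KΩ u.1 v.1 = ⟪φ u, φ v⟫)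
    (a : I → H)
    (ha : ∀ s : I, RepIn φ (a s) (fun u : ↥(I₁ ∩ I₂) => KΩ s u.1))
    (s t : I) (hs : s ∈ I₁ \ (I₁ ∩ I₂)) (ht : t ∈ I₂ \ (I₁ ∩ I₂)) (α : ℝ) :
    (∃ K : I → I → ℝ, IsCompletion ((I₁ ×ˢ I₁) ∪ (I₂ ×ˢ I₂)) KΩ K ∧
      K s t = α + ⟪a s, a t⟫) ↔
    |α| ≤ Real.sqrt ((KΩ s s - ⟪a s, a s⟫) * (KΩ t t - ⟪a t, a t⟫)) := by
  -- notation and basic facts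
  set Ω : Set (I × I) := (I₁ ×ˢ I₁) ∪ (I₂ ×ˢ I₂) with hΩdef
  have hΩmem : ∀ x y : I, (x, y) ∈ Ω ↔ (x ∈ I₁ ∧ y ∈ I₁) ∨ (x ∈ I₂ ∧ y ∈ I₂) := by
    intro x y; simp [hΩdef, Set.mem_prod]
  have covΩ₁ : IsCovOn I₁ KΩ := hpc I₁ (fun p hp => Or.inl hp)
  have covΩ₂ : IsCovOn I₂ KΩ := hpc I₂ (fun p hp => Or.inr hp)
  have hsI₁ : s ∈ I₁ := hs.1
  have hsI₂ : s ∉ I₂ := fun h => hs.2 ⟨hs.1, h⟩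
  have htI₂ : t ∈ I₂ := ht.1
  have htI₁ : t ∉ I₁ := fun h => ht.2 ⟨h, ht.1⟩
  have hcov' : ∀ x : I, x ∉ I₁ → x ∈ I₂ := by
    intro x hx
    have : x ∈ I₁ ∪ I₂ := by rw [hcover]; exact mem_univ x
    exact this.resolve_left hx
  set D : I → I → ℝ := fun x y => KΩ x y - ⟪a x, a y⟫ with hDdef
  set d₁ : ℝ := KΩ s s - ⟪a s, a s⟫ with hd₁def
  set d₂ : ℝ := KΩ t t - ⟪a t, a t⟫ with hd₂def
  -- reproducing and orthogonality facts
  have hbK : ∀ (x : I) (u : ↥(I₁ ∩ I₂)), KΩ x u.1 = ⟪a x, φ u⟫ := fun x u => (ha x).2 u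
  have orth : ∀ (u : ↥(I₁ ∩ I₂)) (y : I), ⟪a y, φ u⟫ = ⟪a y, a u.1⟫ := by
    intro u y
    have hd : ∀ v : ↥(I₁ ∩ I₂), ⟪a u.1 - φ u, φ v⟫ = 0 := by
      intro v
      rw [inner_sub_left, ← hbK u.1 v, ← hφ u v]
      ring
    have h0 : ⟪a y, a u.1 - φ u⟫ = 0 := offdom_inner_closure_span_eq φ (ha y).1 hd
    rw [inner_sub_right] at h0
    linarith
  have haJ : ∀ (u : ↥(I₁ ∩ I₂)) (y : I), ⟪a y, a u.1⟫ = KΩ y u.1 := by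
    intro u y
    rw [← orth, ← hbK y u]
  have DJ₁ : ∀ x ∈ I₁ ∩ I₂, ∀ y ∈ I₁, D x y = 0 := by
    intro x hx y hy
    have h1 : ⟪a x, a y⟫ = KΩ y x := by rw [real_inner_comm]; exact haJ ⟨x, hx⟩ y
    have h2 : KΩ x y = KΩ y x := covΩ₁.1 x hx.1 y hy
    simp only [hDdef]
    rw [h1, h2]; ring
  have DJ₂ : ∀ x ∈ I₁ ∩ I₂, ∀ y ∈ I₂, D x y = 0 := by
    intro x hx y hy
    have h1 : ⟪a x, a y⟫ = KΩ y x := by rw [real_inner_comm]; exact haJ ⟨x, hx⟩ y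
    have h2 : KΩ x y = KΩ y x := covΩ₂.1 x hx.2 y hy
    simp only [hDdef]
    rw [h1, h2]; ring
  -- positivity of the defect kernels
  have covD : ∀ (S : Set I), (∀ u : ↥(I₁ ∩ I₂), u.1 ∈ S) → IsCovOn S KΩ → IsCovOn S D := by
    intro S hJS hcovS
    constructor
    · intro x hx y hy
      simp only [hDdef]
      rw [hcovS.1 x hx y hy, real_inner_comm]
    · intro n x hx c
      have hg := offdom_gram_le_quad φ KΩ S hcovS (fun u : ↥(I₁ ∩ I₂) => u.1)
        hJS hφ n x hx (fun i => a (x i)) (fun i => (ha _).1)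
        (fun i u => hbK _ u) c
      have hsplit : ∑ i, ∑ j, c i * c j * D (x i) (x j)
          = (∑ i, ∑ j, c i * c j * KΩ (x i) (x j))
            - ∑ i, ∑ j, c i * c j * ⟪a (x i), a (x j)⟫ := by
        rw [← Finset.sum_sub_distrib]
        refine Finset.sum_congr rfl fun i _ => ?_
        rw [← Finset.sum_sub_distrib]
        refine Finset.sum_congr rfl fun j _ => ?_
        simp only [hDdef]; ring
      rw [hsplit, offdom_sum_gram_eq]
      linarith [hg]
  have covD₁ : IsCovOn I₁ D := covD I₁ (fun u => u.2.1) covΩ₁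
  have covD₂ : IsCovOn I₂ D := covD I₂ (fun u => u.2.2) covΩ₂
  have hd₁0 : 0 ≤ d₁ := by
    have h := covD₁.2 1 (fun _ => s) (fun _ => hsI₁) (fun _ => 1)
    have h' : 0 ≤ D s s := by simpa using h
    exact h'
  have hd₂0 : 0 ≤ d₂ := by
    have h := covD₂.2 1 (fun _ => t) (fun _ => htI₂) (fun _ => 1)
    have h' : 0 ≤ D t t := by simpa using h
    exact h'
  constructor
  · -- forward direction
    rintro ⟨K, ⟨hKcov, hKres⟩, hKst⟩
    have h2 : ∀ c d : ℝ, 0 ≤ c ^ 2 * d₁ + d ^ 2 * d₂ + 2 * c * d * α := by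
      intro c d
      have hφK2 : ∀ u v : ↥(I₁ ∩ I₂), K u.1 v.1 = ⟪φ u, φ v⟫ := by
        intro u v
        rw [hKres (u.1, v.1) (Or.inl ⟨u.2.1, v.2.1⟩)]
        exact hφ u v
      have hbk2 : ∀ (i : Fin 2) (u : ↥(I₁ ∩ I₂)),
          K (![s, t] i) u.1 = ⟪![a s, a t] i, φ u⟫ := by
        intro i u
        fin_cases i
        · show K s u.1 = ⟪a s, φ u⟫
          rw [hKres (s, u.1) (Or.inl ⟨hsI₁, u.2.1⟩)]
          exact hbK s u
        · show K t u.1 = ⟪a t, φ u⟫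
          rw [hKres (t, u.1) (Or.inr ⟨htI₂, u.2.2⟩)]
          exact hbK t u
      have hb2 : ∀ i : Fin 2, ![a s, a t] i ∈
          closure ((Submodule.span ℝ (Set.range φ) : Submodule ℝ H) : Set H) := by
        intro i
        fin_cases i
        · exact (ha s).1
        · exact (ha t).1
      have hg := offdom_gram_le_quad φ K univ hKcov (fun u : ↥(I₁ ∩ I₂) => u.1)
        (fun _ => mem_univ _) hφK2 2 ![s, t] (fun _ => mem_univ _) ![a s, a t]
        hb2 hbk2 ![c, d]
      simp only [Fin.sum_univ_two, Matrix.cons_val_zero, Matrix.cons_val_one,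
        Matrix.head_cons] at hg
      have h1 : K s s = KΩ s s := hKres (s, s) (Or.inl ⟨hsI₁, hsI₁⟩)
      have h2' : K t t = KΩ t t := hKres (t, t) (Or.inr ⟨htI₂, htI₂⟩)
      have h3 : K t s = K s t := hKcov.1 t (mem_univ _) s (mem_univ _)
      have hL : ‖c • a s + d • a t‖ ^ 2
          = c ^ 2 * ⟪a s, a s⟫ + 2 * c * d * ⟪a s, a t⟫ + d ^ 2 * ⟪a t, a t⟫ := by
        rw [← real_inner_self_eq_norm_sq]
        simp only [inner_add_left, inner_add_right, real_inner_smul_left,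
          real_inner_smul_right]
        rw [real_inner_comm (a t) (a s)]
        ring
      rw [h1, h2', h3, hKst, hL] at hg
      rw [hd₁def, hd₂def]
      nlinarith [hg]
    exact offdom_valrange d₁ d₂ α h2
  · -- reverse direction : construct the completion
    intro hle
    have hsqα : α ^ 2 ≤ d₁ * d₂ := by
      have h1 : |α| ^ 2 ≤ (Real.sqrt (d₁ * d₂)) ^ 2 :=
        pow_le_pow_left₀ (abs_nonneg α) hle 2
      rwa [Real.sq_sqrt (mul_nonneg hd₁0 hd₂0), sq_abs] at h1
    set lam : ℝ := α / (d₁ * d₂) with hlam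
    have hlamval : lam * (d₁ * d₂) = α := by
      by_cases hD : d₁ * d₂ = 0
      · have hα0 : α = 0 := by nlinarith [hsqα, sq_nonneg α]
        rw [hlam, hα0]
        simp
      · rw [hlam]
        field_simp
        rw [mul_assoc, mul_div_assoc, div_self hD, mul_one]
    set K : I → I → ℝ := fun x y =>
      if (x, y) ∈ Ω then KΩ x y
      else if x ∈ I₁ then ⟪a x, a y⟫ + lam * (D x s * D y t)
      else ⟪a x, a y⟫ + lam * (D y s * D x t) with hKdef
    have hKapp : ∀ x y : I, K x y =
        if (x, y) ∈ Ω then KΩ x y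
        else if x ∈ I₁ then ⟪a x, a y⟫ + lam * (D x s * D y t)
        else ⟪a x, a y⟫ + lam * (D y s * D x t) := fun x y => rfl
    have hΩsymm : ∀ x y : I, (x, y) ∈ Ω → (y, x) ∈ Ω := by
      intro x y h
      rcases (hΩmem x y).1 h with ⟨h1, h2⟩ | ⟨h1, h2⟩
      exacts [(hΩmem y x).2 (Or.inl ⟨h2, h1⟩), (hΩmem y x).2 (Or.inr ⟨h2, h1⟩)]
    refine ⟨K, ⟨⟨?_, ?_⟩, ?_⟩, ?_⟩
    · -- symmetry
      intro x _ y _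
      by_cases hxy : (x, y) ∈ Ω
      · have hyx : (y, x) ∈ Ω := hΩsymm x y hxy
        rw [hKapp, hKapp, if_pos hxy, if_pos hyx]
        rcases (hΩmem x y).1 hxy with ⟨h1, h2⟩ | ⟨h1, h2⟩
        exacts [covΩ₁.1 x h1 y h2, covΩ₂.1 x h1 y h2]
      · have hyx : (y, x) ∉ Ω := fun h => hxy (hΩsymm y x h)
        rw [hKapp, hKapp, if_neg hxy, if_neg hyx]
        by_cases hx1 : x ∈ I₁
        · have hy1 : y ∉ I₁ := fun hy => hxy ((hΩmem x y).2 (Or.inl ⟨hx1, hy⟩))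
          rw [if_pos hx1, if_neg hy1, real_inner_comm]
        · have hy1 : y ∈ I₁ := by
            by_contra hy
            exact hxy ((hΩmem x y).2 (Or.inr ⟨hcov' x hx1, hcov' y hy⟩))
          rw [if_neg hx1, if_pos hy1, real_inner_comm]
    · -- positive semidefiniteness
      intro n p hp c
      set c₁ : Fin n → ℝ := fun i => if p i ∈ I₁ then c i else 0 with hc₁
      set c₂ : Fin n → ℝ := fun i => if p i ∈ I₁ then 0 else c i with hc₂
      set x₁ : Fin n → I := fun i => if p i ∈ I₁ then p i else s with hx₁def
      set x₂ : Fin n → I := fun i => if p i ∈ I₁ then t else p i with hx₂def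
      have hx₁ : ∀ i, x₁ i ∈ I₁ := by
        intro i
        simp only [hx₁def]
        split_ifs with h
        exacts [h, hsI₁]
      have hx₂ : ∀ i, x₂ i ∈ I₂ := by
        intro i
        simp only [hx₂def]
        split_ifs with h
        exacts [htI₂, hcov' _ h]
      have pointwise : ∀ i j : Fin n, c i * c j * K (p i) (p j)
          = c i * c j * ⟪a (p i), a (p j)⟫
            + (c₁ i * c₁ j * D (x₁ i) (x₁ j) + c₂ i * c₂ j * D (x₂ i) (x₂ j)
              + lam * ((c₁ i * D (x₁ i) s) * (c₂ j * D (x₂ j) t))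
              + lam * ((c₁ j * D (x₁ j) s) * (c₂ i * D (x₂ i) t))) := by
        intro i j
        by_cases hi : p i ∈ I₁ <;> by_cases hj : p j ∈ I₁
        · -- both in I₁
          have hΩ' : (p i, p j) ∈ Ω := (hΩmem _ _).2 (Or.inl ⟨hi, hj⟩)
          simp only [hKapp, if_pos hΩ', hc₁, hc₂, hx₁def, hx₂def, if_pos hi, if_pos hj]
          have hKD : KΩ (p i) (p j) = ⟪a (p i), a (p j)⟫ + D (p i) (p j) := by
            simp [hDdef]
          rw [hKD]; ring
        · -- p i ∈ I₁, p j ∉ I₁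
          have hj2 : p j ∈ I₂ := hcov' _ hj
          simp only [hKapp, hc₁, hc₂, hx₁def, hx₂def, if_pos hi, if_neg hj]
          by_cases hi2 : p i ∈ I₂
          · have hΩ' : (p i, p j) ∈ Ω := (hΩmem _ _).2 (Or.inr ⟨hi2, hj2⟩)
            rw [if_pos hΩ']
            have hD0 : D (p i) (p j) = 0 := DJ₂ _ ⟨hi, hi2⟩ _ hj2
            have hDs : D (p i) s = 0 := DJ₁ _ ⟨hi, hi2⟩ _ hsI₁
            have hKD : KΩ (p i) (p j) = ⟪a (p i), a (p j)⟫ := by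
              simp only [hDdef] at hD0
              linarith
            rw [hKD, hDs]; ring
          · have hΩ' : (p i, p j) ∉ Ω := by
              intro h
              rcases (hΩmem _ _).1 h with ⟨_, h2⟩ | ⟨h1, _⟩
              exacts [hj h2, hi2 h1]
            rw [if_neg hΩ']; ring
        · -- p i ∉ I₁, p j ∈ I₁
          have hi2 : p i ∈ I₂ := hcov' _ hi
          simp only [hKapp, hc₁, hc₂, hx₁def, hx₂def, if_neg hi, if_pos hj]
          by_cases hj2 : p j ∈ I₂
          · have hΩ' : (p i, p j) ∈ Ω := (hΩmem _ _).2 (Or.inr ⟨hi2, hj2⟩)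
            rw [if_pos hΩ']
            have hD0 : D (p i) (p j) = 0 := by
              rw [covD₂.1 (p i) hi2 (p j) hj2]
              exact DJ₂ _ ⟨hj, hj2⟩ _ hi2
            have hDs : D (p j) s = 0 := DJ₁ _ ⟨hj, hj2⟩ _ hsI₁
            have hKD : KΩ (p i) (p j) = ⟪a (p i), a (p j)⟫ := by
              simp only [hDdef] at hD0
              linarith
            rw [hKD, hDs]; ring
          · have hΩ' : (p i, p j) ∉ Ω := by
              intro h
              rcases (hΩmem _ _).1 h with ⟨h1, _⟩ | ⟨_, h2⟩
              exacts [hi h1, hj2 h2]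
            rw [if_neg hΩ']; ring
        · -- both outside I₁
          have hΩ' : (p i, p j) ∈ Ω := (hΩmem _ _).2 (Or.inr ⟨hcov' _ hi, hcov' _ hj⟩)
          simp only [hKapp, if_pos hΩ', hc₁, hc₂, hx₁def, hx₂def, if_neg hi, if_neg hj]
          have hKD : KΩ (p i) (p j) = ⟪a (p i), a (p j)⟫ + D (p i) (p j) := by
            simp [hDdef]
          rw [hKD]; ring
      have hcross1 : ∑ i, ∑ j, lam * ((c₁ i * D (x₁ i) s) * (c₂ j * D (x₂ j) t))
          = lam * ((∑ i, c₁ i * D (x₁ i) s) * (∑ j, c₂ j * D (x₂ j) t)) := by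
        calc ∑ i, ∑ j, lam * ((c₁ i * D (x₁ i) s) * (c₂ j * D (x₂ j) t))
            = ∑ i, lam * ((c₁ i * D (x₁ i) s) * ∑ j, c₂ j * D (x₂ j) t) :=
              Finset.sum_congr rfl fun i _ => by
                rw [← Finset.mul_sum, ← Finset.mul_sum]
          _ = lam * ((∑ i, c₁ i * D (x₁ i) s) * (∑ j, c₂ j * D (x₂ j) t)) := by
              rw [← Finset.mul_sum, ← Finset.sum_mul]
      have hcross2 : ∑ i, ∑ j, lam * ((c₁ j * D (x₁ j) s) * (c₂ i * D (x₂ i) t))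
          = lam * ((∑ i, c₁ i * D (x₁ i) s) * (∑ j, c₂ j * D (x₂ j) t)) := by
        calc ∑ i, ∑ j, lam * ((c₁ j * D (x₁ j) s) * (c₂ i * D (x₂ i) t))
            = ∑ i, lam * ((∑ j, c₁ j * D (x₁ j) s) * (c₂ i * D (x₂ i) t)) :=
              Finset.sum_congr rfl fun i _ => by
                rw [← Finset.mul_sum, ← Finset.sum_mul]
          _ = lam * ((∑ i, c₁ i * D (x₁ i) s) * (∑ j, c₂ j * D (x₂ j) t)) := by
              rw [← Finset.mul_sum, ← Finset.mul_sum]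
      have hsum : ∑ i, ∑ j, c i * c j * K (p i) (p j)
          = (∑ i, ∑ j, c i * c j * ⟪a (p i), a (p j)⟫)
            + ((∑ i, ∑ j, c₁ i * c₁ j * D (x₁ i) (x₁ j))
              + (∑ i, ∑ j, c₂ i * c₂ j * D (x₂ i) (x₂ j))
              + lam * ((∑ i, c₁ i * D (x₁ i) s) * (∑ j, c₂ j * D (x₂ j) t))
              + lam * ((∑ i, c₁ i * D (x₁ i) s) * (∑ j, c₂ j * D (x₂ j) t))) := by
        calc ∑ i, ∑ j, c i * c j * K (p i) (p j)
            = ∑ i, ∑ j, (c i * c j * ⟪a (p i), a (p j)⟫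
                + (c₁ i * c₁ j * D (x₁ i) (x₁ j) + c₂ i * c₂ j * D (x₂ i) (x₂ j)
                  + lam * ((c₁ i * D (x₁ i) s) * (c₂ j * D (x₂ j) t))
                  + lam * ((c₁ j * D (x₁ j) s) * (c₂ i * D (x₂ i) t)))) :=
              Finset.sum_congr rfl fun i _ => Finset.sum_congr rfl fun j _ => pointwise i j
          _ = _ := by
              simp only [Finset.sum_add_distrib]
              rw [hcross1, hcross2]
      have hgram : 0 ≤ ∑ i, ∑ j, c i * c j * ⟪a (p i), a (p j)⟫ := by
        rw [offdom_sum_gram_eq]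
        positivity
      have hQA0 : 0 ≤ ∑ i, ∑ j, c₁ i * c₁ j * D (x₁ i) (x₁ j) := covD₁.2 n x₁ hx₁ c₁
      have hQB0 : 0 ≤ ∑ i, ∑ j, c₂ i * c₂ j * D (x₂ i) (x₂ j) := covD₂.2 n x₂ hx₂ c₂
      have hcs1 : (∑ i, c₁ i * D (x₁ i) s) ^ 2
          ≤ (∑ i, ∑ j, c₁ i * c₁ j * D (x₁ i) (x₁ j)) * d₁ :=
        offdom_kernel_cs D I₁ covD₁ n x₁ hx₁ c₁ hsI₁
      have hcs2 : (∑ i, c₂ i * D (x₂ i) t) ^ 2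
          ≤ (∑ i, ∑ j, c₂ i * c₂ j * D (x₂ i) (x₂ j)) * d₂ :=
        offdom_kernel_cs D I₂ covD₂ n x₂ hx₂ c₂ htI₂
      have hnb := offdom_num_bound (∑ i, ∑ j, c₁ i * c₁ j * D (x₁ i) (x₁ j))
        (∑ i, ∑ j, c₂ i * c₂ j * D (x₂ i) (x₂ j)) d₁ d₂
        (∑ i, c₁ i * D (x₁ i) s) (∑ i, c₂ i * D (x₂ i) t) α
        hQA0 hQB0 hd₁0 hd₂0 hcs1 hcs2 hsqα
      rw [hsum]
      rw [hlam] at *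
      nlinarith [hgram, hnb]
    · -- restriction to Ω
      intro q hq
      have hq' : (q.1, q.2) ∈ Ω := by rwa [Prod.mk.eta]
      rw [hKapp, if_pos hq']
    · -- the prescribed off-domain value
      have hst : (s, t) ∉ Ω := by
        intro h
        rcases (hΩmem s t).1 h with ⟨_, h2⟩ | ⟨h1, _⟩
        exacts [htI₁ h2, hsI₂ h1]
      rw [hKapp, if_neg hst, if_pos hsI₁]
      have hDss : D s s = d₁ := rfl
      have hDtt : D t t = d₂ := rfl
      rw [hDss, hDtt, hlamval]
      ring
end
end
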